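/- arXiv:2203.05329 — 14 statements merged into one kernel-verified Lean document; each statement's English description precedes it below -/
import Mathlib

section
/- Let f : (X,d_X) → (Y,d) be a surjective large scale continuous map of metric spaces, and suppose (Y,d) has asymptotic dimension 0. Then the induced integral ultrametric d_f^ul is a well-defined metric on X and the map f : (X, d_f^ul) → (Y, d) is a coarse equivalence. -/
/-- `d` is a metric on the set `X`. -/
def IsMetricD {X : Type*} (d : X → X → ℝ) : Prop :=
  (∀ x, d x x = 0) ∧ (∀ x y, d x y = 0 → x = y) ∧ (∀ x y, d x y = d y x) ∧
    (∀ x y z, d x z ≤ d x y + d y z)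

/-- the ultrametric (strong triangle) inequality. -/
def IsUltraD {X : Type*} (d : X → X → ℝ) : Prop :=
  ∀ x y z, d x z ≤ max (d x y) (d y z)

/-- There is an `r`-chain joining `a` and `b`. -/
def ChainD {Y : Type*} (d : Y → Y → ℝ) (r : ℝ) (a b : Y) : Prop :=
  ∃ (k : ℕ) (c : ℕ → Y), c 0 = a ∧ c k = b ∧ ∀ i < k, d (c i) (c (i + 1)) < r

/-- asymptotic dimension 0: chains of uniformly bounded gauge are uniformly bounded. -/
def AsDimZeroD {Y : Type*} (d : Y → Y → ℝ) : Prop :=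
  ∀ r > (0 : ℝ), ∃ s > (0 : ℝ), ∀ a b : Y, ChainD d r a b → d a b ≤ s

/-- large scale continuous (uniformly bornologous). -/
def LSCD {X Y : Type*} (dX : X → X → ℝ) (dY : Y → Y → ℝ) (f : X → Y) : Prop :=
  ∀ R > (0 : ℝ), ∃ s > (0 : ℝ), ∀ x y : X, dX x y ≤ R → dY (f x) (f y) ≤ s

/-- uniformly proper. -/
def UnifProperD {X Y : Type*} (dX : X → X → ℝ) (dY : Y → Y → ℝ) (f : X → Y) : Prop :=
  ∀ R > (0 : ℝ), ∃ s > (0 : ℝ), ∀ x y : X, dY (f x) (f y) ≤ R → dX x y ≤ s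

/-- coarsely surjective. -/
def CoarselySurjD {X Y : Type*} (dY : Y → Y → ℝ) (f : X → Y) : Prop :=
  ∃ R > (0 : ℝ), ∀ y : Y, ∃ x : X, dY (f x) y ≤ R

/-- coarse embedding. -/
def CoarseEmbD {X Y : Type*} (dX : X → X → ℝ) (dY : Y → Y → ℝ) (f : X → Y) : Prop :=
  LSCD dX dY f ∧ UnifProperD dX dY f

/-- coarse equivalence. -/
def CoarseEquivD {X Y : Type*} (dX : X → X → ℝ) (dY : Y → Y → ℝ) (f : X → Y) : Prop :=
  LSCD dX dY f ∧ UnifProperD dX dY f ∧ CoarselySurjD dY f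

/-- the induced integral ultrametric `d_f^ul`. -/
noncomputable def dulD {X Y : Type*} (d : Y → Y → ℝ) (f : X → Y) (x y : X) : ℝ :=
  letI := Classical.decEq X
  if x = y then 0 else
    ((sInf {r : ℕ | 1 ≤ r ∧ ChainD d (r : ℝ) (f x) (f y)} : ℕ) : ℝ)

/-- `d` is a metric on the subset `A`. -/
def IsMetricOnD {X : Type*} (d : X → X → ℝ) (A : Set X) : Prop :=
  (∀ x ∈ A, d x x = 0) ∧ (∀ x ∈ A, ∀ y ∈ A, d x y = 0 → x = y) ∧
    (∀ x ∈ A, ∀ y ∈ A, d x y = d y x) ∧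
    (∀ x ∈ A, ∀ y ∈ A, ∀ z ∈ A, d x z ≤ d x y + d y z)

/-- the ultrametric inequality on a subset. -/
def IsUltraOnD {X : Type*} (d : X → X → ℝ) (A : Set X) : Prop :=
  ∀ x ∈ A, ∀ y ∈ A, ∀ z ∈ A, d x z ≤ max (d x y) (d y z)

/-- every triangle is isosceles. -/
def IsoscelesD {X : Type*} (d : X → X → ℝ) : Prop :=
  ∀ x y z : X, d x y = d y z ∨ d x y = d x z ∨ d y z = d x z

/-- every triangle with vertices in `A` is isosceles. -/
def IsoscelesOnD {X : Type*} (d : X → X → ℝ) (A : Set X) : Prop :=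
  ∀ x ∈ A, ∀ y ∈ A, ∀ z ∈ A, d x y = d y z ∨ d x y = d x z ∨ d y z = d x z

/-- a set is bounded with respect to the distance function `d`. -/
def BoundedD {X : Type*} (d : X → X → ℝ) (A : Set X) : Prop :=
  ∃ C : ℝ, ∀ x ∈ A, ∀ y ∈ A, d x y ≤ C

/-- `d` makes the disjoint union `Σ s, X s` a coarse disjoint union of the family
of metrics `ds`. -/
def IsCoarseDisjointUnion {S : Type*} {X : S → Type*} (ds : ∀ s, X s → X s → ℝ)
    (d : (Σ s, X s) → (Σ s, X s) → ℝ) : Prop :=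
  (∀ (s : S) (x y : X s), d ⟨s, x⟩ ⟨s, y⟩ = ds s x y) ∧
    ∀ M > (0 : ℝ), ∃ B : ∀ s, Set (X s),
      (∀ s, BoundedD (ds s) (B s)) ∧ {s | (B s).Nonempty}.Finite ∧
      ∀ (s t : S) (x : X s) (y : X t), s ≠ t → x ∉ B s → y ∉ B t → d ⟨s, x⟩ ⟨t, y⟩ > M

namespace IIUaux

lemma chain_single {Y : Type*} [MetricSpace Y] {r : ℝ} {a b : Y}
    (h : dist a b < r) : ChainD dist r a b := by
  refine ⟨1, fun i => if i = 0 then a else b, by simp, by simp, ?_⟩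
  intro i hi
  interval_cases i
  simpa using h

lemma chain_mono {Y : Type*} {d : Y → Y → ℝ} {r r' : ℝ} {a b : Y}
    (hrr : r ≤ r') (h : ChainD d r a b) : ChainD d r' a b := by
  obtain ⟨k, c, h0, hk, hs⟩ := h
  exact ⟨k, c, h0, hk, fun i hi => lt_of_lt_of_le (hs i hi) hrr⟩

lemma chain_symm {Y : Type*} [MetricSpace Y] {r : ℝ} {a b : Y}
    (h : ChainD dist r a b) : ChainD dist r b a := by
  obtain ⟨k, c, h0, hk, hs⟩ := h
  refine ⟨k, fun i => c (k - i), by simp [hk], by simp [h0], ?_⟩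
  intro i hi
  show dist (c (k - i)) (c (k - (i + 1))) < r
  have h1 : k - i = (k - (i + 1)) + 1 := by omega
  rw [h1, dist_comm]
  exact hs _ (by omega)

lemma chain_trans {Y : Type*} {d : Y → Y → ℝ} {r : ℝ} {a b e : Y}
    (h1 : ChainD d r a b) (h2 : ChainD d r b e) : ChainD d r a e := by
  obtain ⟨k, c, hc0, hck, hcs⟩ := h1
  obtain ⟨k', c', hc0', hck', hcs'⟩ := h2
  refine ⟨k + k', fun i => if i < k then c i else c' (i - k), ?_, ?_, ?_⟩
  · by_cases hk : 0 < k
    · simp [hk, hc0]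
    · have hk0 : k = 0 := by omega
      subst hk0
      simpa [hc0'] using hck.symm.trans hc0
  · have hkk : ¬ (k + k' < k) := by omega
    simp [hkk, hck']
  · intro i hi
    show d (if i < k then c i else c' (i - k)) (if i + 1 < k then c (i + 1) else c' (i + 1 - k)) < r
    by_cases hA : i + 1 < k
    · have hB : i < k := by omega
      rw [if_pos hB, if_pos hA]
      exact hcs i hB
    · by_cases hB : i < k
      · have hik : i + 1 - k = 0 := by omega
        rw [if_pos hB, if_neg hA, hik, hc0', ← hck]
        have hik2 : k = i + 1 := by omega
        rw [hik2]
        exact hcs i hB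
      · rw [if_neg hB, if_neg hA]
        have hik : i + 1 - k = (i - k) + 1 := by omega
        rw [hik]
        exact hcs' _ (by omega)

lemma set_nonempty {X Y : Type*} [MetricSpace Y] (f : X → Y) (x y : X) :
    {r : ℕ | 1 ≤ r ∧ ChainD (dist : Y → Y → ℝ) (r : ℝ) (f x) (f y)}.Nonempty := by
  refine ⟨⌈dist (f x) (f y)⌉₊ + 1, by omega, chain_single ?_⟩
  have h := Nat.le_ceil (dist (f x) (f y))
  push_cast
  linarith

end IIUaux

/-- If `f : (X, d_X) → (Y, d)` is surjective, large scale continuous,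
and `(Y, d)` has asymptotic dimension 0, then the induced integral ultrametric
`d_f^ul` is a metric on `X` and `f : (X, d_f^ul) → (Y, d)` is a coarse equivalence. -/
theorem induced_integral_ultrametric_coarse_equivalence
    {X Y : Type*} [MetricSpace X] [MetricSpace Y] (f : X → Y)
    (hsurj : Function.Surjective f)
    (hlsc : LSCD (dist : X → X → ℝ) (dist : Y → Y → ℝ) f)
    (hY : AsDimZeroD (dist : Y → Y → ℝ)) :
    IsMetricD (dulD (dist : Y → Y → ℝ) f) ∧
      CoarseEquivD (dulD (dist : Y → Y → ℝ) f) (dist : Y → Y → ℝ) f := by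
  classical
  set S : X → X → Set ℕ := fun x y =>
    {r : ℕ | 1 ≤ r ∧ ChainD (dist : Y → Y → ℝ) (r : ℝ) (f x) (f y)} with hS
  have hne : ∀ x y, (S x y).Nonempty := fun x y => IIUaux.set_nonempty f x y
  have hmem : ∀ x y, sInf (S x y) ∈ S x y := fun x y => Nat.sInf_mem (hne x y)
  have hval : ∀ x y : X, x ≠ y → dulD (dist : Y → Y → ℝ) f x y = ((sInf (S x y) : ℕ) : ℝ) := by
    intro x y hxy
    simp [dulD, hxy, hS]
  have hself : ∀ x : X, dulD (dist : Y → Y → ℝ) f x x = 0 := by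
    intro x; simp [dulD]
  have hsymmS : ∀ x y : X, S x y = S y x := by
    intro x y
    ext r
    exact ⟨fun h => ⟨h.1, IIUaux.chain_symm h.2⟩, fun h => ⟨h.1, IIUaux.chain_symm h.2⟩⟩
  have hsymm : ∀ x y : X, dulD (dist : Y → Y → ℝ) f x y = dulD (dist : Y → Y → ℝ) f y x := by
    intro x y
    by_cases hxy : x = y
    · subst hxy; rfl
    · rw [hval x y hxy, hval y x (Ne.symm hxy), hsymmS]
  have hultra : ∀ x y z : X, dulD (dist : Y → Y → ℝ) f x z ≤
      max (dulD (dist : Y → Y → ℝ) f x y) (dulD (dist : Y → Y → ℝ) f y z) := by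
    intro x y z
    by_cases hxz : x = z
    · subst hxz
      rw [hself]
      refine le_max_of_le_left ?_
      by_cases hxy : x = y
      · subst hxy; rw [hself]
      · rw [hval x y hxy]; positivity
    · by_cases hxy : x = y
      · subst hxy
        rw [hself, hval x z hxz]
        simp
      · by_cases hyz : y = z
        · subst hyz
          rw [hself, hval x y hxz]
          simp
        · rw [hval x z hxz, hval x y hxy, hval y z hyz]
          set m := max (sInf (S x y)) (sInf (S y z)) with hm
          have h1 := hmem x y
          have h2 := hmem y z
          have hc1 : ChainD (dist : Y → Y → ℝ) (m : ℝ) (f x) (f y) :=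
            IIUaux.chain_mono (by exact_mod_cast le_max_left _ _) h1.2
          have hc2 : ChainD (dist : Y → Y → ℝ) (m : ℝ) (f y) (f z) :=
            IIUaux.chain_mono (by exact_mod_cast le_max_right _ _) h2.2
          have hmS : m ∈ S x z := ⟨le_trans h1.1 (le_max_left _ _),
            IIUaux.chain_trans hc1 hc2⟩
          have := Nat.sInf_le hmS
          calc ((sInf (S x z) : ℕ) : ℝ) ≤ (m : ℝ) := by exact_mod_cast this
            _ = max ((sInf (S x y) : ℕ) : ℝ) ((sInf (S y z) : ℕ) : ℝ) := by
              rw [hm, Nat.cast_max]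
  have hnonneg : ∀ x y : X, 0 ≤ dulD (dist : Y → Y → ℝ) f x y := by
    intro x y
    by_cases hxy : x = y
    · subst hxy; rw [hself]
    · rw [hval x y hxy]; positivity
  refine ⟨⟨hself, ?_, hsymm, ?_⟩, ?_, ?_, ?_⟩
  · intro x y h
    by_contra hxy
    rw [hval x y hxy] at h
    have h1 := (hmem x y).1
    have : (1 : ℝ) ≤ ((sInf (S x y) : ℕ) : ℝ) := by exact_mod_cast h1
    linarith
  · intro x y z
    calc dulD (dist : Y → Y → ℝ) f x z ≤ _ := hultra x y z
      _ ≤ _ := max_le_add_of_nonneg (hnonneg x y) (hnonneg y z)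
  · -- LSCD
    intro R hR
    obtain ⟨s, hs, hchain⟩ := hY (R + 1) (by linarith)
    refine ⟨s, hs, ?_⟩
    intro x y hxy
    by_cases h : x = y
    · subst h; simpa using hs.le
    · rw [hval x y h] at hxy
      refine hchain _ _ (IIUaux.chain_mono ?_ (hmem x y).2)
      linarith
  · -- UnifProper
    intro R hR
    refine ⟨((⌈R⌉₊ + 1 : ℕ) : ℝ), by positivity, ?_⟩
    intro x y h
    by_cases hxy : x = y
    · subst hxy; rw [hself]; positivity
    · rw [hval x y hxy]
      have hmemR : (⌈R⌉₊ + 1 : ℕ) ∈ S x y := by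
        refine ⟨by omega, IIUaux.chain_single ?_⟩
        have h2 : R ≤ (⌈R⌉₊ : ℝ) := Nat.le_ceil R
        push_cast
        linarith
      exact_mod_cast Nat.sInf_le hmemR
  · -- coarsely surjective
    refine ⟨1, one_pos, fun y => ?_⟩
    obtain ⟨x, hx⟩ := hsurj y
    exact ⟨x, by simp [hx]⟩
end

section
/- Every isosceles metric space (X,d) has asymptotic dimension 0; in fact, for every m > 0, any two points of X joined by an m-chain are at distance less than 2m. -/
/-- Every isosceles metric space has asymptotic dimension 0;
in fact any two points joined by an `m`-chain (`m > 0`) are at distance `< 2 * m`. -/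
theorem isosceles_asdim_zero
    {X : Type*} [MetricSpace X] (h : IsoscelesD (dist : X → X → ℝ)) :
    AsDimZeroD (dist : X → X → ℝ) ∧
      ∀ m > (0 : ℝ), ∀ a b : X, ChainD (dist : X → X → ℝ) m a b → dist a b < 2 * m := by
  have key : ∀ m > (0 : ℝ), ∀ a b : X, ChainD (dist : X → X → ℝ) m a b →
      dist a b < 2 * m := by
    rintro m hm a b ⟨k, c, h0, hk, hc⟩
    have H : ∀ i ≤ k, dist a (c i) < 2 * m := by
      intro i
      induction i with
      | zero =>
        intro _
        rw [h0]
        simpa using by linarith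
      | succ n ih =>
        intro hn
        have h1 : dist a (c n) < 2 * m := ih (Nat.le_of_succ_le hn)
        have h2 : dist (c n) (c (n + 1)) < m := hc n (Nat.lt_of_succ_le hn)
        have htri := dist_triangle a (c n) (c (n + 1))
        rcases h a (c n) (c (n + 1)) with he | he | he
        · linarith
        · linarith
        · linarith
    have := H k le_rfl
    rwa [hk] at this
  exact ⟨fun r hr => ⟨2 * r, by linarith, fun a b hch => (key r hr a b hch).le⟩, key⟩
end

section
/- If (X, d_X) is a separable metric space of asymptotic dimension 0, then there is a countable integral ultrametric space (Y, d) and a coarse equivalence from (X, d_X) to (Y, d). Moreover, if every bounded subset of X has compact closure, then Y can be chosen so that all of its bounded subsets are finite. -/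
section Chains
open scoped Classical
variable {X : Type*} [MetricSpace X]

lemma myChain_mono {r r' : ℝ} {a b : X} (h : ChainD dist r a b) (hr : r ≤ r') :
    ChainD dist r' a b := by
  obtain ⟨k, c, h0, hk, hs⟩ := h
  exact ⟨k, c, h0, hk, fun i hi => lt_of_lt_of_le (hs i hi) hr⟩

lemma myChain_single {r : ℝ} {x y : X} (hr : dist x y < r) : ChainD dist r x y := by
  refine ⟨1, fun i => if i = 0 then x else y, by simp, by simp, ?_⟩
  intro i hi
  interval_cases i
  simpa using hr

lemma myChain_symm {r : ℝ} {a b : X} (h : ChainD dist r a b) : ChainD dist r b a := by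
  obtain ⟨k, c, h0, hk, hs⟩ := h
  refine ⟨k, fun i => c (k - i), by simpa using hk, by simpa using h0, ?_⟩
  intro i hi
  have e : k - (i + 1) + 1 = k - i := by omega
  have := hs (k - (i + 1)) (by omega)
  rw [e] at this
  rw [dist_comm]
  exact this

lemma myChain_trans {r : ℝ} {a b c : X} (h1 : ChainD dist r a b) (h2 : ChainD dist r b c) :
    ChainD dist r a c := by
  obtain ⟨k, p, hp0, hpk, hps⟩ := h1
  obtain ⟨l, q, hq0, hql, hqs⟩ := h2
  refine ⟨k + l, fun i => if i < k then p i else q (i - k), ?_, ?_, ?_⟩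
  · by_cases hk : 0 < k
    · simpa [hk] using hp0
    · have : k = 0 := by omega
      subst this
      simp only [Nat.lt_irrefl, if_false]
      rw [hq0, ← hpk, hp0]
  · have : ¬ (k + l < k) := by omega
    simp only [this, if_false]
    simpa using hql
  · intro i hi
    by_cases h1 : i + 1 < k
    · have h2 : i < k := by omega
      simpa [h1, h2] using hps i h2
    · by_cases h2 : i < k
      · have hik : i + 1 = k := by omega
        have : q (i + 1 - k) = p (i + 1) := by rw [hik]; simp [hq0, ← hpk]
        simp only [h1, h2, if_true, if_false, this]
        exact hps i h2
      · have e : i - k + 1 = i + 1 - k := by omega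
        have := hqs (i - k) (by omega)
        rw [e] at this
        simpa [h1, h2] using this

/-- the chain-distance spectrum set. -/
def chS (x y : X) : Set ℕ := {r : ℕ | 1 ≤ r ∧ ChainD dist (r : ℝ) x y}

lemma chS_nonempty (x y : X) : (chS x y).Nonempty := by
  refine ⟨⌈dist x y⌉₊ + 1, Nat.le_add_left 1 _, myChain_single ?_⟩
  calc dist x y ≤ (⌈dist x y⌉₊ : ℝ) := Nat.le_ceil _
    _ < ((⌈dist x y⌉₊ + 1 : ℕ) : ℝ) := by push_cast; linarith

/-- the integral chain ultrametric on `X`. -/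
noncomputable def du (x y : X) : ℝ :=
  if x = y then 0 else ((sInf (chS x y) : ℕ) : ℝ)

lemma du_self (x : X) : du x x = 0 := by rw [du, if_pos rfl]

lemma du_spec {x y : X} (h : x ≠ y) :
    ∃ n : ℕ, du x y = (n : ℝ) ∧ 1 ≤ n ∧ ChainD dist (n : ℝ) x y := by
  have hm := Nat.sInf_mem (chS_nonempty x y)
  exact ⟨sInf (chS x y), if_neg h, hm.1, hm.2⟩

lemma du_le_of_mem {x y : X} {m : ℕ} (hm : m ∈ chS x y) : du x y ≤ (m : ℝ) := by
  by_cases h : x = y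
  · simp [du, h]
  · rw [du, if_neg h]
    exact_mod_cast Nat.sInf_le hm

lemma du_nonneg (x y : X) : 0 ≤ du x y := by
  by_cases h : x = y
  · simp [du, h]
  · rw [du, if_neg h]; positivity

lemma du_comm (x y : X) : du x y = du y x := by
  have hs : ∀ a b : X, chS a b = chS b a := by
    intro a b
    ext r
    exact ⟨fun ⟨h1, h2⟩ => ⟨h1, myChain_symm h2⟩, fun ⟨h1, h2⟩ => ⟨h1, myChain_symm h2⟩⟩
  by_cases h : x = y
  · subst h; rfl
  · rw [du, du, if_neg h, if_neg (Ne.symm h), hs]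

lemma du_eq_zero {x y : X} (h : du x y = 0) : x = y := by
  by_contra hxy
  obtain ⟨n, hn, h1, -⟩ := du_spec hxy
  rw [hn] at h
  have : n = 0 := by exact_mod_cast h
  omega

lemma du_integral (x y : X) : ∃ n : ℕ, du x y = (n : ℝ) := by
  by_cases h : x = y
  · exact ⟨0, by simp [du, h]⟩
  · exact ⟨sInf (chS x y), if_neg h⟩

lemma du_ultra (x y z : X) : du x z ≤ max (du x y) (du y z) := by
  by_cases hxz : x = z
  · subst hxz
    simp only [du_self]
    exact le_max_of_le_left (du_nonneg x y)
  by_cases hxy : x = y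
  · subst hxy; exact le_max_right _ _
  by_cases hyz : y = z
  · subst hyz; exact le_max_left _ _
  obtain ⟨n1, e1, hn1, hc1⟩ := du_spec hxy
  obtain ⟨n2, e2, hn2, hc2⟩ := du_spec hyz
  have hmem : max n1 n2 ∈ chS x z := by
    refine ⟨le_max_of_le_left hn1, myChain_trans (b := y) ?_ ?_⟩
    · exact myChain_mono hc1 (by exact_mod_cast le_max_left n1 n2)
    · exact myChain_mono hc2 (by exact_mod_cast le_max_right n1 n2)
  calc du x z ≤ ((max n1 n2 : ℕ) : ℝ) := du_le_of_mem hmem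
    _ = max (n1 : ℝ) (n2 : ℝ) := Nat.cast_max ..
    _ = max (du x y) (du y z) := by rw [e1, e2]

lemma du_triangle (x y z : X) : du x z ≤ du x y + du y z :=
  le_trans (du_ultra x y z)
    (max_le (le_add_of_nonneg_right (du_nonneg y z)) (le_add_of_nonneg_left (du_nonneg x y)))

/-- large scale continuity of `id : (X, dist) → (X, du)` in raw form. -/
lemma du_lsc {R : ℝ} (hR : 0 < R) {x y : X} (hxy : dist x y ≤ R) :
    du x y ≤ ((⌈R⌉₊ + 1 : ℕ) : ℝ) := by
  refine du_le_of_mem ⟨Nat.le_add_left 1 _, myChain_single ?_⟩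
  calc dist x y ≤ R := hxy
    _ ≤ (⌈R⌉₊ : ℝ) := Nat.le_ceil _
    _ < ((⌈R⌉₊ + 1 : ℕ) : ℝ) := by push_cast; linarith

/-- uniform properness of `id : (X, dist) → (X, du)` in raw form. -/
lemma du_proper (h : AsDimZeroD (dist : X → X → ℝ)) {R : ℝ} (hR : 0 < R) :
    ∃ s > (0 : ℝ), ∀ x y : X, du x y ≤ R → dist x y ≤ s := by
  obtain ⟨s, hs, hchain⟩ := h (R + 1) (by linarith)
  refine ⟨s, hs, fun x y hd => ?_⟩
  by_cases hxy : x = y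
  · subst hxy; simpa using hs.le
  · obtain ⟨n, e, -, hc⟩ := du_spec hxy
    refine hchain x y (myChain_mono hc ?_)
    rw [e] at hd
    linarith

end Chains

lemma pack {X : Type*} [MetricSpace X] (h : AsDimZeroD (dist : X → X → ℝ))
    (A : Set X) (hA : A.Countable) (hd : ∀ x : X, ∃ a ∈ A, dist x a ≤ 1) :
    ∃ (Y : Type) (dY : Y → Y → ℝ), Countable Y ∧ IsMetricD dY ∧ IsUltraD dY ∧
      (∀ a b : Y, ∃ n : ℕ, dY a b = (n : ℝ)) ∧
      ((∀ x ∈ A, ∀ y ∈ A, x ≠ y → 1 ≤ dist x y) →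
        (∀ B : Set X, Bornology.IsBounded B → IsCompact (closure B)) →
        ∀ B : Set Y, BoundedD dY B → B.Finite) ∧
      ∃ f : X → Y, CoarseEquivD (dist : X → X → ℝ) dY f := by
  obtain ⟨e, he⟩ := Set.countable_iff_exists_injective.mp hA
  set Y : Type := ↥(Set.range e) with hY
  let q : ↥A ≃ Y := Equiv.ofInjective e he
  let π : Y → X := fun y => ((q.symm y : ↥A) : X)
  have πinj : Function.Injective π := fun y z hyz =>
    q.symm.injective (Subtype.ext hyz)
  let dY : Y → Y → ℝ := fun y z => du (π y) (π z)
  let g : X → ↥A := fun x => ⟨(hd x).choose, (hd x).choose_spec.1⟩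
  have hg : ∀ x : X, dist x ((g x : ↥A) : X) ≤ 1 := fun x => (hd x).choose_spec.2
  let f : X → Y := fun x => q (g x)
  have hπf : ∀ x : X, π (f x) = ((g x : ↥A) : X) := by
    intro x
    show ((q.symm (q (g x)) : ↥A) : X) = _
    rw [Equiv.symm_apply_apply]
  have hπA : ∀ y : Y, π y ∈ A := fun y => (q.symm y).2
  refine ⟨Y, dY, ?_, ?_, ?_, ?_, ?_, ?_⟩
  · exact Subtype.countable
  · exact ⟨fun y => du_self _, fun y z h0 => πinj (du_eq_zero h0),
      fun y z => du_comm _ _, fun y z w => du_triangle _ _ _⟩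
  · exact fun y z w => du_ultra _ _ _
  · exact fun y z => du_integral _ _
  · -- bounded implies finite, assuming separation and proper space
    intro hsep hcomp B hB
    obtain ⟨C, hC⟩ := hB
    set T : Set X := π '' B with hT
    have hTsep : ∀ u ∈ T, ∀ v ∈ T, u ≠ v → 1 ≤ dist u v := by
      rintro u ⟨y, hy, rfl⟩ v ⟨z, hz, rfl⟩ huv
      exact hsep _ (hπA y) _ (hπA z) huv
    have hTbd : Bornology.IsBounded T := by
      obtain ⟨s, hs, hss⟩ := du_proper h (R := max C 1) (lt_of_lt_of_le one_pos (le_max_right _ _))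
      rw [Metric.isBounded_iff]
      refine ⟨s, ?_⟩
      rintro u ⟨y, hy, rfl⟩ v ⟨z, hz, rfl⟩
      exact hss _ _ (le_trans (hC y hy z hz) (le_max_left _ _))
    have hK : IsCompact (closure T) := hcomp T hTbd
    obtain ⟨t, -, htfin, hcov⟩ := hK.finite_cover_balls (e := 1/2) (by norm_num)
    have hTfin : T.Finite := by
      have hsub : T ⊆ ⋃ z ∈ t, (T ∩ Metric.ball z (1/2)) := by
        intro u hu
        have := hcov (subset_closure hu)
        simp only [Set.mem_iUnion] at this ⊢
        obtain ⟨z, hz, hb⟩ := this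
        exact ⟨z, hz, hu, hb⟩
      refine Set.Finite.subset (htfin.biUnion fun z _ => ?_) hsub
      refine Set.Subsingleton.finite ?_
      rintro u ⟨hu, hbu⟩ v ⟨hv, hbv⟩
      by_contra huv
      have h1 : 1 ≤ dist u v := hTsep u hu v hv huv
      have h2 : dist u v ≤ dist u z + dist z v := dist_triangle u z v
      rw [Metric.mem_ball] at hbu hbv
      rw [dist_comm z v] at h2
      linarith
    exact hTfin.of_finite_image (Function.Injective.injOn πinj)
  · -- coarse equivalence
    refine ⟨f, ?_, ?_, ?_⟩
    · -- LSCD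
      intro R hR
      refine ⟨((⌈R + 2⌉₊ + 1 : ℕ) : ℝ), by positivity, fun x y hxy => ?_⟩
      have : dist (π (f x)) (π (f y)) ≤ R + 2 := by
        rw [hπf x, hπf y]
        have h1 := hg x
        have h2 := hg y
        have := dist_triangle4 ((g x : ↥A) : X) x y ((g y : ↥A) : X)
        rw [dist_comm ((g x : ↥A) : X) x] at this
        linarith
      exact du_lsc (by linarith) this
    · -- UnifProperD
      intro R hR
      obtain ⟨s, hs, hss⟩ := du_proper h hR
      refine ⟨s + 2, by linarith, fun x y hxy => ?_⟩
      have hduv : dist (π (f x)) (π (f y)) ≤ s := hss _ _ hxy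
      rw [hπf x, hπf y] at hduv
      have h1 := hg x
      have h2 := hg y
      have := dist_triangle4 x ((g x : ↥A) : X) ((g y : ↥A) : X) y
      rw [dist_comm ((g y : ↥A) : X) y] at this
      linarith
    · -- coarsely surjective
      refine ⟨((⌈(1:ℝ)⌉₊ + 1 : ℕ) : ℝ), by positivity, fun y => ?_⟩
      refine ⟨π y, ?_⟩
      have h1 : dist (π (f (π y))) (π y) ≤ 1 := by
        rw [hπf (π y), dist_comm]
        exact hg (π y)
      exact du_lsc one_pos h1

/-- A separable metric space of asymptotic dimension 0 is coarsely
equivalent to a countable integral ultrametric space; if moreover bounded subsets of `X`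
have compact closure, the target can be chosen with all bounded subsets finite. -/

theorem separable_asdim_zero_coarse_equiv_countable_integral_ultrametric
    {X : Type*} [MetricSpace X] [TopologicalSpace.SeparableSpace X]
    (h : AsDimZeroD (dist : X → X → ℝ)) :
    (∃ (Y : Type) (dY : Y → Y → ℝ), Countable Y ∧ IsMetricD dY ∧ IsUltraD dY ∧
        (∀ a b : Y, ∃ n : ℕ, dY a b = (n : ℝ)) ∧
        ∃ f : X → Y, CoarseEquivD (dist : X → X → ℝ) dY f) ∧
    ((∀ B : Set X, Bornology.IsBounded B → IsCompact (closure B)) →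
      ∃ (Y : Type) (dY : Y → Y → ℝ), Countable Y ∧ IsMetricD dY ∧ IsUltraD dY ∧
        (∀ a b : Y, ∃ n : ℕ, dY a b = (n : ℝ)) ∧
        (∀ B : Set Y, BoundedD dY B → B.Finite) ∧
        ∃ f : X → Y, CoarseEquivD (dist : X → X → ℝ) dY f) := by
  obtain ⟨D, hDc, hDd⟩ := TopologicalSpace.exists_countable_dense X
  constructor
  · have hDnear : ∀ x : X, ∃ a ∈ D, dist x a ≤ 1 := by
      intro x
      obtain ⟨a, ha, hlt⟩ := hDd.exists_dist_lt x one_pos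
      exact ⟨a, ha, hlt.le⟩
    obtain ⟨Y, dY, h1, h2, h3, h4, -, h6⟩ := pack h D hDc hDnear
    exact ⟨Y, dY, h1, h2, h3, h4, h6⟩
  · intro hcomp
    set S : Set (Set X) := {N | ∀ x ∈ N, ∀ y ∈ N, x ≠ y → 1 ≤ dist x y} with hS
    have hzorn : ∀ c ⊆ S, IsChain (· ⊆ ·) c → ∃ ub ∈ S, ∀ s ∈ c, s ⊆ ub := by
      intro c hc hchain
      refine ⟨⋃₀ c, ?_, fun s hs => Set.subset_sUnion_of_mem hs⟩
      rintro x ⟨N1, hN1, hx⟩ y ⟨N2, hN2, hy⟩ hxy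
      rcases hchain.total hN1 hN2 with hsub | hsub
      · exact hc hN2 x (hsub hx) y hy hxy
      · exact hc hN1 x hx y (hsub hy) hxy
    obtain ⟨M, hM⟩ := zorn_subset S hzorn
    have hMsep : ∀ x ∈ M, ∀ y ∈ M, x ≠ y → 1 ≤ dist x y := hM.prop
    have hMnear : ∀ x : X, ∃ a ∈ M, dist x a ≤ 1 := by
      intro x
      by_contra hcon
      push_neg at hcon
      have hins : insert x M ∈ S := by
        rintro u (rfl | hu) v (rfl | hv) huv
        · exact absurd rfl huv
        · exact le_of_lt (hcon v hv)
        · rw [dist_comm]; exact le_of_lt (hcon u hu)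
        · exact hMsep u hu v hv huv
      have hsub : insert x M ⊆ M := hM.2 hins (Set.subset_insert x M)
      have hxM : x ∈ M := hsub (Set.mem_insert x M)
      exact absurd (by simpa using hcon x hxM) (by norm_num)
    have hMc : M.Countable := by
      rw [Set.countable_iff_exists_injective]
      obtain ⟨eD, heD⟩ := Set.countable_iff_exists_injective.mp hDc
      have hpick : ∀ m : M, ∃ a : D, dist (m : X) ((a : X)) < 1/2 := by
        intro m
        obtain ⟨a, ha, hlt⟩ := hDd.exists_dist_lt (m : X) (by norm_num : (0:ℝ) < 1/2)
        exact ⟨⟨a, ha⟩, hlt⟩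
      choose φ hφ using hpick
      refine ⟨fun m => eD (φ m), fun m1 m2 hm => ?_⟩
      have hφeq : φ m1 = φ m2 := heD hm
      by_contra hne
      have hne' : (m1 : X) ≠ (m2 : X) := fun hx => hne (Subtype.ext hx)
      have h1 := hMsep _ m1.2 _ m2.2 hne'
      have h2 := hφ m1
      have h3 := hφ m2
      rw [hφeq] at h2
      have h4 := dist_triangle (m1 : X) ((φ m2 : X)) (m2 : X)
      rw [dist_comm ((φ m2 : X)) ((m2 : X))] at h4
      linarith
    obtain ⟨Y, dY, h1, h2, h3, h4, h5, h6⟩ := pack h M hMc hMnear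
    exact ⟨Y, dY, h1, h2, h3, h4, h5 hMsep hcomp, h6⟩
end

section
/- Let f : X → S be a surjective function from a set X onto a metric space (S, d_S), and for each t ∈ S let d_t be a metric on the fiber X_t := f^{-1}(t). Suppose the diameter of each X_t (with respect to d_t) is at most 0.5·d_S(u,t) for all u ≠ t in S. Then there is a unique metric d on X restricting to d_t on each fiber X_t and satisfying d(x,y) = d_S(f(x), f(y)) whenever f(x) ≠ f(y); in particular f : (X,d) → (S,d_S) is a metric resolution. Moreover, if all the fibers (X_t, d_t) and (S, d_S) are isosceles, then (X, d) is isosceles. -/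
/-- If the fibers of a surjection `f : X → (S, d_S)` carry metrics whose
diameters are at most `0.5 * d_S(u, t)` for all `u ≠ t`, then there is a unique metric on `X`
restricting to the fiber metrics and making `f` a metric resolution; moreover if all fibers
and the base are isosceles, so is the total space. -/
theorem metric_resolution_exists_unique
    {X S : Type*} (f : X → S) (dS : S → S → ℝ) (dt : S → X → X → ℝ)
    (hsurj : Function.Surjective f) (hS : IsMetricD dS)
    (hfib : ∀ t : S, IsMetricOnD (dt t) {x | f x = t})
    (hdiam : ∀ t u : S, u ≠ t → ∀ x y : X, f x = t → f y = t →
      dt t x y ≤ 0.5 * dS u t) :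
    (∃! d : X → X → ℝ, IsMetricD d ∧
        (∀ x y : X, f x = f y → d x y = dt (f x) x y) ∧
        (∀ x y : X, f x ≠ f y → d x y = dS (f x) (f y))) ∧
    (∀ d : X → X → ℝ,
        (IsMetricD d ∧ (∀ x y : X, f x = f y → d x y = dt (f x) x y) ∧
          (∀ x y : X, f x ≠ f y → d x y = dS (f x) (f y))) →
        (∀ t : S, IsoscelesOnD (dt t) {x | f x = t}) → IsoscelesD dS →
        IsoscelesD d) := by
  classical
  obtain ⟨hS0, hSsep, hSsym, hStri⟩ := hS
  have hSnn : ∀ a b : S, 0 ≤ dS a b := by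
    intro a b
    have h := hStri a b a
    rw [hS0 a, hSsym b a] at h
    linarith
  have hfnn : ∀ t : S, ∀ x ∈ {x | f x = t}, ∀ y ∈ {x | f x = t}, 0 ≤ dt t x y := by
    intro t x hx y hy
    have h := (hfib t).2.2.2 x hx y hy x hx
    rw [(hfib t).1 x hx, (hfib t).2.2.1 y hy x hx] at h
    linarith
  set d : X → X → ℝ := fun x y => if f x = f y then dt (f x) x y else dS (f x) (f y) with hd
  have hmem : ∀ x : X, x ∈ {z | f z = f x} := fun x => rfl
  have hprop : IsMetricD d ∧ (∀ x y : X, f x = f y → d x y = dt (f x) x y) ∧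
      (∀ x y : X, f x ≠ f y → d x y = dS (f x) (f y)) := by
    refine ⟨⟨?_, ?_, ?_, ?_⟩, ?_, ?_⟩
    · intro x; simp only [hd, if_pos rfl]; exact (hfib (f x)).1 x rfl
    · intro x y h
      by_cases hxy : f x = f y
      · rw [hd] at h; simp only [if_pos hxy] at h
        exact (hfib (f x)).2.1 x rfl y hxy.symm h
      · rw [hd] at h; simp only [if_neg hxy] at h
        exact absurd (hSsep _ _ h) hxy
    · intro x y
      by_cases hxy : f x = f y
      · simp only [hd, if_pos hxy, if_pos hxy.symm, ← hxy]
        exact (hfib (f x)).2.2.1 x rfl y hxy.symm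
      · simp only [hd, if_neg hxy, if_neg (Ne.symm hxy)]
        exact hSsym _ _
    · intro x y z
      by_cases hxy : f x = f y <;> by_cases hyz : f y = f z
      · have hxz : f x = f z := hxy.trans hyz
        simp only [hd, if_pos hxy, if_pos hyz, if_pos hxz]
        rw [hxy]
        exact (hfib (f y)).2.2.2 x hxy y rfl z hyz.symm
      · have hxz : f x ≠ f z := fun h => hyz (hxy.symm.trans h)
        simp only [hd, if_pos hxy, if_neg hyz, if_neg hxz]
        rw [hxy]
        have := hfnn (f y) x hxy y rfl
        linarith
      · have hxz : f x ≠ f z := fun h => hxy (h.trans hyz.symm)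
        simp only [hd, if_pos hyz, if_neg hxy, if_neg hxz]
        rw [hyz]
        have := hfnn (f z) y hyz z rfl
        linarith
      · by_cases hxz : f x = f z
        · simp only [hd, if_pos hxz, if_neg hxy, if_neg hyz]
          have h1 := hdiam (f x) (f y) (Ne.symm hxy) x z rfl hxz.symm
          have h2 := hSnn (f x) (f y)
          have h3 := hSsym (f y) (f x)
          have h5 : dS (f y) (f z) = dS (f y) (f x) := by rw [hxz]
          linarith
        · simp only [hd, if_neg hxy, if_neg hyz, if_neg hxz]
          exact hStri _ _ _
    · intro x y h; simp only [hd, if_pos h]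
    · intro x y h; simp only [hd, if_neg h]
  constructor
  · refine ⟨d, hprop, ?_⟩
    intro d' ⟨_, h1, h2⟩
    funext x y
    by_cases hxy : f x = f y
    · rw [h1 x y hxy, hd]; simp [hxy]
    · rw [h2 x y hxy, hd]; simp [hxy]
  · rintro d' ⟨_, h1, h2⟩ hisoF hisoS x y z
    by_cases hxy : f x = f y <;> by_cases hyz : f y = f z
    · have hxz : f x = f z := hxy.trans hyz
      rw [h1 x y hxy, h1 y z hyz, h1 x z hxz, hxy]
      exact hisoF (f y) x hxy y rfl z hyz.symm
    · have hxz : f x ≠ f z := fun h => hyz (hxy.symm.trans h)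
      rw [h2 y z hyz, h2 x z hxz, ← hxy]
      right; right; rfl
    · have hxz : f x ≠ f z := fun h => hxy (h.trans hyz.symm)
      rw [h2 x y hxy, h2 x z hxz, ← hyz]
      right; left; rfl
    · by_cases hxz : f x = f z
      · rw [h2 x y hxy, h2 y z hyz, hSsym (f y) (f z), ← hxz]
        left; rfl
      · rw [h2 x y hxy, h2 y z hyz, h2 x z hxz]
        exact hisoS (f x) (f y) (f z)
end

section
/- Let f : (X,d) → (S,d_S) be a surjective metric resolution where d_S is an ultrametric on S. If for each t ∈ S the restriction of d to the fiber X_t := f^{-1}(t) is an ultrametric and the diameter of each X_t is at most d_S(u,t) for all u ≠ t, then d is an ultrametric on X. -/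
/-- A metric resolution over an ultrametric base, with ultrametric fibers
whose diameters are at most `d_S(u,t)` for all `u ≠ t`, has ultrametric total space. -/
theorem metric_resolution_ultrametric
    {X S : Type*} (f : X → S) (d : X → X → ℝ) (dS : S → S → ℝ)
    (hsurj : Function.Surjective f)
    (hd : IsMetricD d) (hdS : IsMetricD dS) (hudS : IsUltraD dS)
    (hres : ∀ x y : X, f x ≠ f y → d x y = dS (f x) (f y))
    (hfib : ∀ t : S, IsUltraOnD d {x | f x = t})
    (hdiam : ∀ t u : S, u ≠ t → ∀ x y : X, f x = t → f y = t → d x y ≤ dS u t) :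
    IsUltraD d := by
  intro x y z
  by_cases hxz : f x = f z
  · by_cases hxy : f x = f y
    · -- all in the same fiber
      exact hfib (f x) x rfl y hxy.symm z hxz.symm
    · -- f y different, x z in fiber f x
      have h1 : d x z ≤ dS (f y) (f x) :=
        hdiam (f x) (f y) (fun h => hxy h.symm) x z rfl hxz.symm
      have h2 : d y z = dS (f y) (f z) := hres y z (fun h => hxy (hxz.trans h.symm))
      rw [← hxz] at h2
      exact le_max_of_le_right (h1.trans_eq h2.symm)
  · have hxz' : d x z = dS (f x) (f z) := hres x z hxz
    by_cases hxy : f x = f y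
    · have hyz : f y ≠ f z := fun h => hxz (hxy.trans h)
      have : d y z = dS (f y) (f z) := hres y z hyz
      rw [← hxy, ← hxz'] at this
      exact le_max_of_le_right this.symm.le
    · by_cases hyz : f y = f z
      · have : d x y = dS (f x) (f y) := hres x y hxy
        rw [hyz] at this
        exact le_max_of_le_left (hxz'.trans_le this.symm.le)
      · have h1 : d x y = dS (f x) (f y) := hres x y hxy
        have h2 : d y z = dS (f y) (f z) := hres y z hyz
        rw [hxz', h1, h2]
        exact hudS (f x) (f y) (f z)
end

section
/- Let (X,d) be an ultrametric space. Define ρ on the collection of nonempty bounded subsets of X by ρ(A,A) = 0 and ρ(A,B) = sup{ d(x,y) : x ∈ A, y ∈ B } for A ≠ B. Then ρ is an ultrametric on the set of nonempty bounded subsets of X. -/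
/-- The sup-distance on nonempty bounded subsets (`0` on the diagonal). -/
noncomputable def rhoD {X : Type*} [MetricSpace X] (A B : Set X) : ℝ :=
  letI := Classical.dec (A = B)
  if A = B then 0 else sSup {r : ℝ | ∃ x ∈ A, ∃ y ∈ B, r = dist x y}

section RhoAux

variable {X : Type*} [MetricSpace X]

lemma rhoS_bdd {A B : Set X} (hA : Bornology.IsBounded A) (hB : Bornology.IsBounded B)
    (ha : A.Nonempty) (hb : B.Nonempty) :
    BddAbove {r : ℝ | ∃ x ∈ A, ∃ y ∈ B, r = dist x y} := by
  obtain ⟨a, ha'⟩ := ha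
  obtain ⟨b, hb'⟩ := hb
  obtain ⟨C₁, hC₁⟩ := Metric.isBounded_iff.1 hA
  obtain ⟨C₂, hC₂⟩ := Metric.isBounded_iff.1 hB
  refine ⟨C₁ + (dist a b + C₂), ?_⟩
  rintro r ⟨x, hx, y, hy, rfl⟩
  calc dist x y ≤ dist x a + dist a y := dist_triangle ..
    _ ≤ dist x a + (dist a b + dist b y) := by
        gcongr
        exact dist_triangle ..
    _ ≤ C₁ + (dist a b + C₂) := by
        gcongr
        exacts [hC₁ hx ha', hC₂ hb' hy]

lemma rhoS_nonempty {A B : Set X} (ha : A.Nonempty) (hb : B.Nonempty) :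
    Set.Nonempty {r : ℝ | ∃ x ∈ A, ∃ y ∈ B, r = dist x y} := by
  obtain ⟨a, ha'⟩ := ha
  obtain ⟨b, hb'⟩ := hb
  exact ⟨dist a b, a, ha', b, hb', rfl⟩

lemma dist_le_rhoD {A B : Set X} (hA : Bornology.IsBounded A) (hB : Bornology.IsBounded B)
    (ha : A.Nonempty) (hb : B.Nonempty) (hne : A ≠ B) {x y : X} (hx : x ∈ A) (hy : y ∈ B) :
    dist x y ≤ rhoD A B := by
  rw [rhoD, if_neg hne]
  exact le_csSup (rhoS_bdd hA hB ha hb) ⟨x, hx, y, hy, rfl⟩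

lemma rhoD_nonneg {A B : Set X} (hA : Bornology.IsBounded A) (hB : Bornology.IsBounded B)
    (ha : A.Nonempty) (hb : B.Nonempty) : 0 ≤ rhoD A B := by
  by_cases h : A = B
  · rw [rhoD, if_pos h]
  · obtain ⟨a, ha'⟩ := ha
    obtain ⟨b, hb'⟩ := hb
    exact dist_nonneg.trans (dist_le_rhoD hA hB ⟨a, ha'⟩ ⟨b, hb'⟩ h ha' hb')

lemma rhoD_le {A B : Set X} (ha : A.Nonempty) (hb : B.Nonempty) (hne : A ≠ B) {c : ℝ}
    (h : ∀ x ∈ A, ∀ y ∈ B, dist x y ≤ c) : rhoD A B ≤ c := by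
  rw [rhoD, if_neg hne]
  refine csSup_le (rhoS_nonempty ha hb) ?_
  rintro r ⟨x, hx, y, hy, rfl⟩
  exact h x hx y hy

lemma rhoD_comm (A B : Set X) : rhoD A B = rhoD B A := by
  by_cases h : A = B
  · rw [rhoD, rhoD, if_pos h, if_pos h.symm]
  · rw [rhoD, rhoD, if_neg h, if_neg (Ne.symm h)]
    congr 1
    ext r
    constructor
    · rintro ⟨x, hx, y, hy, rfl⟩; exact ⟨y, hy, x, hx, dist_comm x y⟩
    · rintro ⟨y, hy, x, hx, rfl⟩; exact ⟨x, hx, y, hy, dist_comm y x⟩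

end RhoAux

/-- For an ultrametric space `(X, d)`, the function
`ρ(A, B) = sup { d(x, y) : x ∈ A, y ∈ B }` (with `ρ(A, A) = 0`) is an ultrametric
on the collection of nonempty bounded subsets of `X`. -/
theorem rho_ultrametric_on_bounded_subsets
    {X : Type*} [MetricSpace X] (hu : IsUltraD (dist : X → X → ℝ)) :
    IsMetricD (fun A B : {A : Set X // A.Nonempty ∧ Bornology.IsBounded A} =>
        rhoD A.1 B.1) ∧
    IsUltraD (fun A B : {A : Set X // A.Nonempty ∧ Bornology.IsBounded A} =>
        rhoD A.1 B.1) := by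
  have ultra : IsUltraD (fun A B : {A : Set X // A.Nonempty ∧ Bornology.IsBounded A} =>
      rhoD A.1 B.1) := by
    rintro ⟨A, hAne, hAb⟩ ⟨B, hBne, hBb⟩ ⟨C, hCne, hCb⟩
    simp only
    by_cases hAC : A = C
    · rw [rhoD, if_pos hAC]
      exact le_max_of_le_left (rhoD_nonneg hAb hBb hAne hBne)
    by_cases hAB : A = B
    · subst hAB
      exact le_max_right _ _
    by_cases hBC : B = C
    · subst hBC
      exact le_max_left _ _
    refine rhoD_le hAne hCne hAC ?_
    intro x hx z hz
    obtain ⟨y, hy⟩ := hBne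
    calc dist x z ≤ max (dist x y) (dist y z) := hu x y z
      _ ≤ max (rhoD A B) (rhoD B C) :=
        max_le_max (dist_le_rhoD hAb hBb hAne ⟨y, hy⟩ hAB hx hy)
          (dist_le_rhoD hBb hCb ⟨y, hy⟩ hCne hBC hy hz)
  refine ⟨⟨?_, ?_, ?_, ?_⟩, ultra⟩
  · rintro ⟨A, hA⟩
    simp [rhoD]
  · rintro ⟨A, hAne, hAb⟩ ⟨B, hBne, hBb⟩ h
    simp only at h
    refine Subtype.ext ?_
    by_contra hne
    have : ∃ p, (p ∈ A ∧ p ∉ B) ∨ (p ∈ B ∧ p ∉ A) := by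
      by_contra hc
      push_neg at hc
      exact hne (Set.ext fun p => ⟨fun hp => (hc p).1 hp, fun hp => (hc p).2 hp⟩)
    obtain ⟨p, ⟨hp, hp'⟩ | ⟨hp, hp'⟩⟩ := this
    · obtain ⟨q, hq⟩ := hBne
      have h1 : dist p q ≤ rhoD A B := dist_le_rhoD hAb hBb hAne ⟨q, hq⟩ hne hp hq
      have h2 : p ≠ q := fun e => hp' (e ▸ hq)
      have := dist_pos.2 h2
      linarith [h1, h.le]
    · obtain ⟨q, hq⟩ := hAne
      have h1 : dist q p ≤ rhoD A B := dist_le_rhoD hAb hBb ⟨q, hq⟩ hBne hne hq hp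
      have h2 : q ≠ p := fun e => hp' (e ▸ hq)
      have := dist_pos.2 h2
      linarith [h1, h.le]
  · rintro ⟨A, hA⟩ ⟨B, hB⟩
    exact rhoD_comm A B
  · rintro ⟨A, hAne, hAb⟩ ⟨B, hBne, hBb⟩ ⟨C, hCne, hCb⟩
    have := ultra ⟨A, hAne, hAb⟩ ⟨B, hBne, hBb⟩ ⟨C, hCne, hCb⟩
    simp only at this ⊢
    refine this.trans (max_le_add_of_nonneg ?_ ?_)
    · exact rhoD_nonneg hAb hBb hAne hBne
    · exact rhoD_nonneg hBb hCb hBne hCne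
end

section
/- Let f : X → S be a surjective function from a set X onto a metric space (S, d_S), let d_t be a metric on each fiber f^{-1}(t), let g : S → X be a section of f, and let d be the splicing of the metrics d_t along g. Then d is a metric on X. Moreover, if d_S and all the fiber metrics d_t are ultrametrics, then d is an ultrametric. -/
/-- The splicing of metrics on the fibers of a surjection `f : X → (S, d_S)`
along a section `g` is a metric; if the base metric and all fiber metrics are ultrametrics,
the splicing is an ultrametric. -/
theorem splicing_is_metric
    {X S : Type*} (f : X → S) (dS : S → S → ℝ) (dt : S → X → X → ℝ)
    (g : S → X) (d : X → X → ℝ)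
    (hsurj : Function.Surjective f) (hsec : ∀ s : S, f (g s) = s)
    (hS : IsMetricD dS) (hfib : ∀ t : S, IsMetricOnD (dt t) {x | f x = t})
    (hd1 : ∀ x y : X, f x = f y → d x y = dt (f x) x y)
    (hd2 : ∀ x y : X, f x ≠ f y →
      d x y = max (dS (f x) (f y))
        (max (dt (f x) x (g (f x))) (dt (f y) y (g (f y))))) :
    IsMetricD d ∧
      (IsUltraD dS → (∀ t : S, IsUltraOnD (dt t) {x | f x = t}) → IsUltraD d) := by
  obtain ⟨hS0, hSsep, hSsym, hStri⟩ := hS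
  have hSnn : ∀ u v, 0 ≤ dS u v := by
    intro u v
    have h1 := hStri u v u
    have h2 := hS0 u
    have h3 := hSsym u v
    linarith
  have hSpos : ∀ u v, u ≠ v → 0 < dS u v := by
    intro u v huv
    rcases lt_or_eq_of_le (hSnn u v) with h | h
    · exact h
    · exact absurd (hSsep u v h.symm) huv
  have h0 : ∀ t x, f x = t → dt t x x = 0 := fun t x hx => (hfib t).1 x hx
  have hsep : ∀ t x y, f x = t → f y = t → dt t x y = 0 → x = y :=
    fun t x y hx hy => (hfib t).2.1 x hx y hy
  have hsym : ∀ t x y, f x = t → f y = t → dt t x y = dt t y x :=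
    fun t x y hx hy => (hfib t).2.2.1 x hx y hy
  have htri : ∀ t x y z, f x = t → f y = t → f z = t →
      dt t x z ≤ dt t x y + dt t y z :=
    fun t x y z hx hy hz => (hfib t).2.2.2 x hx y hy z hz
  have hnn : ∀ t x y, f x = t → f y = t → 0 ≤ dt t x y := by
    intro t x y hx hy
    have t1 := htri t x y x hx hy hx
    have t2 := hsym t x y hx hy
    have t3 := h0 t x hx
    linarith
  constructor
  · refine ⟨?_, ?_, ?_, ?_⟩
    · intro x
      rw [hd1 x x rfl]
      exact h0 (f x) x rfl
    · intro x y hxy0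
      by_cases h : f x = f y
      · rw [hd1 x y h] at hxy0
        exact hsep (f x) x y rfl h.symm hxy0
      · rw [hd2 x y h] at hxy0
        have h1 := hSpos (f x) (f y) h
        have h2 : dS (f x) (f y) ≤ 0 := hxy0 ▸ le_max_left _ _
        linarith
    · intro x y
      by_cases h : f x = f y
      · rw [hd1 x y h, hd1 y x h.symm, ← h]
        exact hsym (f x) x y rfl h.symm
      · rw [hd2 x y h, hd2 y x (fun e => h e.symm), hSsym (f x) (f y),
          max_comm (dt (f y) y (g (f y))) (dt (f x) x (g (f x)))]
    · intro x y z
      by_cases hxy : f x = f y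
      · by_cases hyz : f y = f z
        · have hxz : f x = f z := hxy.trans hyz
          rw [hd1 x z hxz, hd1 x y hxy, hd1 y z hyz, ← hxy]
          exact htri (f x) x y z rfl hxy.symm hxz.symm
        · have hxz : f x ≠ f z := fun e => hyz (hxy.symm.trans e)
          rw [hd2 x z hxz, hd1 x y hxy, hd2 y z hyz, ← hxy]
          have h1 : dt (f x) x (g (f x)) ≤ dt (f x) x y + dt (f x) y (g (f x)) :=
            htri (f x) x y (g (f x)) rfl hxy.symm (hsec (f x))
          have h2 := hnn (f x) x y rfl hxy.symm
          have e1 : dS (f x) (f z) ≤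
              max (dS (f x) (f z)) (max (dt (f x) y (g (f x))) (dt (f z) z (g (f z)))) :=
            le_max_left _ _
          have e2 : dt (f x) y (g (f x)) ≤
              max (dS (f x) (f z)) (max (dt (f x) y (g (f x))) (dt (f z) z (g (f z)))) :=
            le_max_of_le_right (le_max_left _ _)
          have e3 : dt (f z) z (g (f z)) ≤
              max (dS (f x) (f z)) (max (dt (f x) y (g (f x))) (dt (f z) z (g (f z)))) :=
            le_max_of_le_right (le_max_right _ _)
          refine max_le ?_ (max_le ?_ ?_) <;> linarith
      · by_cases hyz : f y = f z
        · have hxz : f x ≠ f z := fun e => hxy (e.trans hyz.symm)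
          rw [hd2 x z hxz, hd2 x y hxy, hd1 y z hyz, ← hyz]
          have h1 : dt (f y) z (g (f y)) ≤ dt (f y) z y + dt (f y) y (g (f y)) :=
            htri (f y) z y (g (f y)) hyz.symm rfl (hsec (f y))
          have h2 : dt (f y) y z = dt (f y) z y := hsym (f y) y z rfl hyz.symm
          have h3 := hnn (f y) y z rfl hyz.symm
          have e1 : dS (f x) (f y) ≤
              max (dS (f x) (f y)) (max (dt (f x) x (g (f x))) (dt (f y) y (g (f y)))) :=
            le_max_left _ _
          have e2 : dt (f x) x (g (f x)) ≤
              max (dS (f x) (f y)) (max (dt (f x) x (g (f x))) (dt (f y) y (g (f y)))) :=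
            le_max_of_le_right (le_max_left _ _)
          have e3 : dt (f y) y (g (f y)) ≤
              max (dS (f x) (f y)) (max (dt (f x) x (g (f x))) (dt (f y) y (g (f y)))) :=
            le_max_of_le_right (le_max_right _ _)
          refine max_le ?_ (max_le ?_ ?_) <;> linarith
        · by_cases hxz : f x = f z
          · rw [hd1 x z hxz, hd2 x y hxy, hd2 y z hyz, ← hxz]
            have h1 : dt (f x) x z ≤ dt (f x) x (g (f x)) + dt (f x) (g (f x)) z :=
              htri (f x) x (g (f x)) z rfl (hsec (f x)) hxz.symm
            have h2 : dt (f x) z (g (f x)) = dt (f x) (g (f x)) z :=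
              hsym (f x) z (g (f x)) hxz.symm (hsec (f x))
            have e1 : dt (f x) x (g (f x)) ≤
                max (dS (f x) (f y)) (max (dt (f x) x (g (f x))) (dt (f y) y (g (f y)))) :=
              le_max_of_le_right (le_max_left _ _)
            have e2 : dt (f x) z (g (f x)) ≤
                max (dS (f y) (f x)) (max (dt (f y) y (g (f y))) (dt (f x) z (g (f x)))) :=
              le_max_of_le_right (le_max_right _ _)
            linarith
          · rw [hd2 x z hxz, hd2 x y hxy, hd2 y z hyz]
            have h1 := hStri (f x) (f y) (f z)
            have e1 : dS (f x) (f y) ≤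
                max (dS (f x) (f y)) (max (dt (f x) x (g (f x))) (dt (f y) y (g (f y)))) :=
              le_max_left _ _
            have e2 : dS (f y) (f z) ≤
                max (dS (f y) (f z)) (max (dt (f y) y (g (f y))) (dt (f z) z (g (f z)))) :=
              le_max_left _ _
            have e3 : dt (f x) x (g (f x)) ≤
                max (dS (f x) (f y)) (max (dt (f x) x (g (f x))) (dt (f y) y (g (f y)))) :=
              le_max_of_le_right (le_max_left _ _)
            have e4 : dt (f z) z (g (f z)) ≤
                max (dS (f y) (f z)) (max (dt (f y) y (g (f y))) (dt (f z) z (g (f z)))) :=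
              le_max_of_le_right (le_max_right _ _)
            have n1 : (0:ℝ) ≤ max (dS (f x) (f y)) (max (dt (f x) x (g (f x))) (dt (f y) y (g (f y)))) :=
              le_trans (hSnn _ _) (le_max_left _ _)
            have n2 : (0:ℝ) ≤ max (dS (f y) (f z)) (max (dt (f y) y (g (f y))) (dt (f z) z (g (f z)))) :=
              le_trans (hSnn _ _) (le_max_left _ _)
            refine max_le ?_ (max_le ?_ ?_) <;> linarith
  · intro hSu hdtu
    have hu : ∀ t x y z, f x = t → f y = t → f z = t →
        dt t x z ≤ max (dt t x y) (dt t y z) :=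
      fun t x y z hx hy hz => hdtu t x hx y hy z hz
    intro x y z
    by_cases hxy : f x = f y
    · by_cases hyz : f y = f z
      · have hxz : f x = f z := hxy.trans hyz
        rw [hd1 x z hxz, hd1 x y hxy, hd1 y z hyz, ← hxy]
        exact hu (f x) x y z rfl hxy.symm hxz.symm
      · have hxz : f x ≠ f z := fun e => hyz (hxy.symm.trans e)
        rw [hd2 x z hxz, hd1 x y hxy, hd2 y z hyz, ← hxy]
        have h1 : dt (f x) x (g (f x)) ≤ max (dt (f x) x y) (dt (f x) y (g (f x))) :=
          hu (f x) x y (g (f x)) rfl hxy.symm (hsec (f x))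
        have e1 : dt (f x) x y ≤ max (dt (f x) x y)
            (max (dS (f x) (f z)) (max (dt (f x) y (g (f x))) (dt (f z) z (g (f z))))) :=
          le_max_left _ _
        have e2 : dt (f x) y (g (f x)) ≤ max (dt (f x) x y)
            (max (dS (f x) (f z)) (max (dt (f x) y (g (f x))) (dt (f z) z (g (f z))))) :=
          le_max_of_le_right (le_max_of_le_right (le_max_left _ _))
        refine max_le ?_ (max_le ?_ ?_)
        · exact le_max_of_le_right (le_max_left _ _)
        · exact le_trans h1 (max_le e1 e2)
        · exact le_max_of_le_right (le_max_of_le_right (le_max_right _ _))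
    · by_cases hyz : f y = f z
      · have hxz : f x ≠ f z := fun e => hxy (e.trans hyz.symm)
        rw [hd2 x z hxz, hd2 x y hxy, hd1 y z hyz, ← hyz]
        have h1 : dt (f y) z (g (f y)) ≤ max (dt (f y) z y) (dt (f y) y (g (f y))) :=
          hu (f y) z y (g (f y)) hyz.symm rfl (hsec (f y))
        have h2 : dt (f y) y z = dt (f y) z y := hsym (f y) y z rfl hyz.symm
        have e1 : dt (f y) z y ≤ max
            (max (dS (f x) (f y)) (max (dt (f x) x (g (f x))) (dt (f y) y (g (f y)))))
            (dt (f y) y z) := h2 ▸ le_max_right _ _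
        have e2 : dt (f y) y (g (f y)) ≤ max
            (max (dS (f x) (f y)) (max (dt (f x) x (g (f x))) (dt (f y) y (g (f y)))))
            (dt (f y) y z) :=
          le_max_of_le_left (le_max_of_le_right (le_max_right _ _))
        refine max_le ?_ (max_le ?_ ?_)
        · exact le_max_of_le_left (le_max_left _ _)
        · exact le_max_of_le_left (le_max_of_le_right (le_max_left _ _))
        · exact le_trans h1 (max_le e1 e2)
      · by_cases hxz : f x = f z
        · rw [hd1 x z hxz, hd2 x y hxy, hd2 y z hyz, ← hxz]
          have h1 : dt (f x) x z ≤ max (dt (f x) x (g (f x))) (dt (f x) (g (f x)) z) :=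
            hu (f x) x (g (f x)) z rfl (hsec (f x)) hxz.symm
          have h2 : dt (f x) z (g (f x)) = dt (f x) (g (f x)) z :=
            hsym (f x) z (g (f x)) hxz.symm (hsec (f x))
          refine le_trans h1 (max_le ?_ ?_)
          · exact le_max_of_le_left (le_max_of_le_right (le_max_left _ _))
          · exact h2 ▸ le_max_of_le_right (le_max_of_le_right (le_max_right _ _))
        · rw [hd2 x z hxz, hd2 x y hxy, hd2 y z hyz]
          have h1 := hSu (f x) (f y) (f z)
          refine max_le ?_ (max_le ?_ ?_)
          · refine le_trans h1 (max_le ?_ ?_)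
            · exact le_max_of_le_left (le_max_left _ _)
            · exact le_max_of_le_right (le_max_left _ _)
          · exact le_max_of_le_left (le_max_of_le_right (le_max_left _ _))
          · exact le_max_of_le_right (le_max_of_le_right (le_max_right _ _))
end

section
/- Let {(X_s, d_s)}_{s∈S} be a family of metric spaces and let d be a metric on the disjoint union ⨿_{s∈S} X_s restricting to d_s on each X_s. Then (⨿_{s∈S} X_s, d) is a coarse disjoint union of the family if and only if the following two conditions hold: (i) for every sequence {x_n}_{n≥1} of points of ⨿_{s∈S} X_s belonging to pairwise distinct parts X_s, one has d(a, x_n) → ∞ for every point a; (ii) for every M > 0 and every sequence of pairs (x_n, y_n) with d(x_n, y_n) < M for all n and d(a, x_n) → ∞ for some point a, there is k ≥ 1 such that for every n ≥ k there is an index s ∈ S with x_n, y_n ∈ X_s. -/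
/-- A metric `d` on a disjoint union restricting to the given metrics on
the parts makes it a coarse disjoint union if and only if: (i) every sequence of points in
pairwise distinct parts diverges to infinity, and (ii) for every `M > 0`, any sequence of
pairs at distance `< M` which diverges to infinity eventually has both entries in the
same part. -/
theorem coarse_disjoint_union_iff_sequences
    {S : Type*} {X : S → Type*} (ds : ∀ s, X s → X s → ℝ)
    (d : (Σ s, X s) → (Σ s, X s) → ℝ)
    (hds : ∀ s, IsMetricD (ds s)) (hd : IsMetricD d)
    (hres : ∀ (s : S) (x y : X s), d ⟨s, x⟩ ⟨s, y⟩ = ds s x y) :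
    IsCoarseDisjointUnion ds d ↔
      ((∀ x : ℕ → Σ s, X s, (∀ n m : ℕ, n ≠ m → (x n).1 ≠ (x m).1) →
          ∀ a : Σ s, X s, Filter.Tendsto (fun n => d a (x n)) Filter.atTop Filter.atTop) ∧
       (∀ M > (0 : ℝ), ∀ x y : ℕ → Σ s, X s, (∀ n : ℕ, d (x n) (y n) < M) →
          (∃ a : Σ s, X s, Filter.Tendsto (fun n => d a (x n)) Filter.atTop Filter.atTop) →
          ∃ k : ℕ, ∀ n ≥ k, (x n).1 = (y n).1)) := by

  classical
  obtain ⟨hd0, -, hdsymm, hdtri⟩ := hd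
  constructor
  · rintro ⟨-, hB⟩
    refine ⟨?_, ?_⟩
    · -- (i)
      intro x hx a
      rw [Filter.tendsto_atTop]
      by_contra hcon
      simp only [Filter.eventually_atTop] at hcon
      push_neg at hcon
      obtain ⟨M, hM⟩ := hcon
      set M' := max M 1 with hM'def
      have hM'pos : (0 : ℝ) < M' := lt_of_lt_of_le one_pos (le_max_right _ _)
      obtain ⟨B, hBdd, hFin, hfar⟩ := hB (2 * M') (by linarith)
      have hinj : Function.Injective fun n : ℕ => (x n).1 := by
        intro n m h
        by_contra hne
        exact hx n m hne h
      have hfinA : {n : ℕ | (B (x n).1).Nonempty}.Finite :=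
        hFin.preimage (f := fun n : ℕ => (x n).1) hinj.injOn
      obtain ⟨N, hN⟩ := hfinA.bddAbove
      obtain ⟨n₁, hn₁, hdn₁⟩ := hM (N + 1)
      obtain ⟨n₂, hn₂, hdn₂⟩ := hM (n₁ + 1)
      have hne : (x n₁).1 ≠ (x n₂).1 := hx _ _ (by omega)
      have hout : ∀ n, N + 1 ≤ n → (x n).2 ∉ B (x n).1 := by
        intro n hn hmem
        have h1 : n ∈ {n : ℕ | (B (x n).1).Nonempty} := ⟨_, hmem⟩
        have h2 := hN h1
        omega
      have hgt := hfar (x n₁).1 (x n₂).1 (x n₁).2 (x n₂).2 hne (hout n₁ hn₁)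
        (hout n₂ (by omega))
      simp only [Sigma.eta] at hgt
      have htr : d (x n₁) (x n₂) ≤ d a (x n₁) + d a (x n₂) := by
        have h := hdtri (x n₁) a (x n₂)
        rw [hdsymm (x n₁) a] at h
        linarith
      have hMle : M ≤ M' := le_max_left _ _
      linarith
    · -- (ii)
      intro M hM x y hxy hex
      obtain ⟨a, ha⟩ := hex
      by_contra hcon
      push_neg at hcon
      obtain ⟨B, hBdd, hFin, hfar⟩ := hB M hM
      choose C hC using hBdd
      set bound : S → ℝ := fun s =>
        if h : (B s).Nonempty then d a ⟨s, h.choose⟩ + C s else 0 with hbound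
      obtain ⟨K, hK⟩ := (hFin.image bound).bddAbove
      have hbK : ∀ z : Σ s, X s, z.2 ∈ B z.1 → d a z ≤ K := by
        intro z hz
        obtain ⟨zs, zx⟩ := z
        have hne' : (B zs).Nonempty := ⟨_, hz⟩
        have h1 : d a ⟨zs, zx⟩ ≤ d a ⟨zs, hne'.choose⟩ + d ⟨zs, hne'.choose⟩ ⟨zs, zx⟩ :=
          hdtri _ _ _
        have h2 : d ⟨zs, hne'.choose⟩ (⟨zs, zx⟩ : Σ s, X s) = ds zs hne'.choose zx :=
          hres _ _ _
        have h3 : ds zs hne'.choose zx ≤ C zs := hC zs _ hne'.choose_spec _ hz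
        have h4 : bound zs ≤ K := hK ⟨zs, hne', rfl⟩
        rw [hbound] at h4
        simp only [dif_pos hne'] at h4
        linarith
      have key : ∀ n, (x n).1 ≠ (y n).1 → d a (x n) ≤ K + M := by
        intro n hne
        have hnot : ¬((x n).2 ∉ B (x n).1 ∧ (y n).2 ∉ B (y n).1) := by
          rintro ⟨h1, h2⟩
          have h3 := hfar _ _ _ _ hne h1 h2
          simp only [Sigma.eta] at h3
          linarith [hxy n]
        rcases not_and_or.mp hnot with h1 | h2
        · rw [not_not] at h1
          have h5 := hbK (x n) h1
          linarith
        · rw [not_not] at h2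
          have h5 := hbK (y n) h2
          have h6 : d a (x n) ≤ d a (y n) + d (y n) (x n) := hdtri _ _ _
          rw [hdsymm (y n) (x n)] at h6
          linarith [hxy n]
      obtain ⟨N, hNev⟩ := Filter.eventually_atTop.mp (Filter.tendsto_atTop.mp ha (K + M + 1))
      obtain ⟨n, hn, hnne⟩ := hcon N
      have h7 := key n hnne
      have h8 := hNev n hn
      linarith
  · rintro ⟨h1, h2⟩
    refine ⟨hres, ?_⟩
    intro M hM
    refine ⟨fun s => {x | ∃ t, ∃ y : X t, t ≠ s ∧ d ⟨s, x⟩ ⟨t, y⟩ ≤ M}, ?_, ?_, ?_⟩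
    · -- bounded
      intro s
      by_contra hnb
      simp only [BoundedD] at hnb
      push_neg at hnb
      obtain ⟨hsd0, -, hssymm, hstri⟩ := hds s
      obtain ⟨x₀, hx₀, -, -, -⟩ := hnb 0
      have hz : ∀ n : ℕ, ∃ z, (∃ t, ∃ y : X t, t ≠ s ∧ d ⟨s, z⟩ ⟨t, y⟩ ≤ M) ∧
          (n : ℝ) < ds s x₀ z := by
        intro n
        obtain ⟨u, hu, v, hv, huv⟩ := hnb (2 * n)
        rcases lt_or_ge (n : ℝ) (ds s x₀ u) with h | h
        · exact ⟨u, hu, h⟩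
        · refine ⟨v, hv, ?_⟩
          have h9 := hstri u x₀ v
          rw [hssymm u x₀] at h9
          linarith
      choose z hzB hzd using hz
      choose t w ht hw using hzB
      have htend : Filter.Tendsto (fun n => d ⟨s, x₀⟩ ⟨s, z n⟩) Filter.atTop Filter.atTop := by
        refine Filter.tendsto_atTop_mono (fun n => ?_) tendsto_natCast_atTop_atTop
        rw [hres]
        exact (hzd n).le
      obtain ⟨k, hk⟩ := h2 (M + 1) (by linarith) (fun n => ⟨s, z n⟩) (fun n => ⟨t n, w n⟩)
        (fun n => lt_of_le_of_lt (hw n) (by linarith)) ⟨⟨s, x₀⟩, htend⟩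
      exact ht k ((hk k le_rfl).symm)
    · -- finitely many nonempty
      by_contra hinf
      have hinf' : {s | ({x | ∃ t, ∃ y : X t, t ≠ s ∧ d ⟨s, x⟩ ⟨t, y⟩ ≤ M} :
          Set (X s)).Nonempty}.Infinite := hinf
      set e := hinf'.natEmbedding with he
      choose xx hxx using fun n => (e n).2
      choose t w ht hw using hxx
      have hdist : ∀ n m : ℕ, n ≠ m →
          ((fun n => (⟨(e n : S), xx n⟩ : Σ s, X s)) n).1 ≠
          ((fun n => (⟨(e n : S), xx n⟩ : Σ s, X s)) m).1 := by
        intro n m hnm h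
        exact hnm (e.injective (Subtype.ext h))
      have htend := h1 (fun n => ⟨(e n : S), xx n⟩) hdist ⟨(e 0 : S), xx 0⟩
      obtain ⟨k, hk⟩ := h2 (M + 1) (by linarith) (fun n => ⟨(e n : S), xx n⟩)
        (fun n => ⟨t n, w n⟩)
        (fun n => lt_of_le_of_lt (hw n) (by linarith)) ⟨_, htend⟩
      exact ht k ((hk k le_rfl).symm)
    · -- separation
      intro s t x y hst hxB hyB
      by_contra hle
      push_neg at hle
      exact hxB ⟨t, y, Ne.symm hst, hle⟩
end

section
/- Let f : X → (S, d_S) be a surjective function, and equip X with the metric d obtained by splicing metrics on the fibers of f along a section g : S → X. If (S, d_S) is a coarse disjoint union of its points, then (X, d) is a coarse disjoint union of the fibers of f. -/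
/-- If `X` carries the splicing metric along a section of `f : X → S` and
`(S, d_S)` is a coarse disjoint union of its points, then `X` is a coarse disjoint union of
the fibers of `f`. -/
theorem splicing_coarse_disjoint_union_of_fibers
    {X S : Type*} (f : X → S) (dS : S → S → ℝ) (dt : S → X → X → ℝ)
    (g : S → X) (d : X → X → ℝ)
    (hsurj : Function.Surjective f) (hsec : ∀ s : S, f (g s) = s)
    (hS : IsMetricD dS) (hfib : ∀ t : S, IsMetricOnD (dt t) {x | f x = t})
    (hd1 : ∀ x y : X, f x = f y → d x y = dt (f x) x y)
    (hd2 : ∀ x y : X, f x ≠ f y →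
      d x y = max (dS (f x) (f y))
        (max (dt (f x) x (g (f x))) (dt (f y) y (g (f y)))))
    (hSproper : ∀ B : Set S, BoundedD dS B → B.Finite)
    (hSsep : ∀ M > (0 : ℝ), ∃ B : Set S, B.Finite ∧
      ∀ u ∉ B, ∀ t ∉ B, u ≠ t → dS u t > M) :
    ∀ M > (0 : ℝ), ∃ B : S → Set X,
      (∀ t : S, B t ⊆ {x | f x = t}) ∧ (∀ t : S, BoundedD d (B t)) ∧
      {t | (B t).Nonempty}.Finite ∧
      ∀ x y : X, f x ≠ f y → x ∉ B (f x) → y ∉ B (f y) → d x y > M := by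
  intro M hM
  obtain ⟨BS, hBSfin, hBSsep⟩ := hSsep M hM
  refine ⟨fun t => {x | f x = t ∧ t ∈ BS ∧ dt t x (g t) ≤ M}, ?_, ?_, ?_, ?_⟩
  · intro t x hx; exact hx.1
  · intro t
    obtain ⟨hzero, hpos, hsymm, htri⟩ := hfib t
    refine ⟨M + M, ?_⟩
    rintro x ⟨hfx, -, hxb⟩ y ⟨hfy, -, hyb⟩
    have hxy : f x = f y := by rw [hfx, hfy]
    have hgt : f (g t) = t := hsec t
    calc d x y = dt t x y := by rw [hd1 x y hxy, hfx]
      _ ≤ dt t x (g t) + dt t (g t) y := htri x hfx (g t) hgt y hfy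
      _ ≤ M + M := add_le_add hxb (by rw [hsymm (g t) hgt y hfy]; exact hyb)
  · refine hBSfin.subset ?_
    rintro t ⟨x, hx⟩
    exact hx.2.1
  · intro x y hne hx hy
    rw [hd2 x y hne]
    by_cases hu : f x ∈ BS
    · have hx' : ¬ dt (f x) x (g (f x)) ≤ M := fun h => hx ⟨rfl, hu, h⟩
      calc M < dt (f x) x (g (f x)) := lt_of_not_ge hx'
        _ ≤ _ := le_max_of_le_right (le_max_left _ _)
    · by_cases ht : f y ∈ BS
      · have hy' : ¬ dt (f y) y (g (f y)) ≤ M := fun h => hy ⟨rfl, ht, h⟩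
        calc M < dt (f y) y (g (f y)) := lt_of_not_ge hy'
          _ ≤ _ := le_max_of_le_right (le_max_right _ _)
      · calc M < dS (f x) (f y) := hBSsep _ hu _ ht hne
          _ ≤ _ := le_max_left _ _
end

section
/- Every nonempty integral ultrametric space (X, d) can be partitioned into countably many bounded subsets {X_s}_{s∈S} such that (X, d) is a coarse disjoint union of the family {X_s}_{s∈S} (with each X_s carrying the restricted metric). -/
/-- Every nonempty integral ultrametric space can be partitioned into
countably many bounded subsets of which it is a coarse disjoint union. -/
theorem integral_ultrametric_coarse_disjoint_union_of_bounded_subsets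
    {X : Type*} [MetricSpace X] [Nonempty X]
    (hu : IsUltraD (dist : X → X → ℝ))
    (hint : ∀ x y : X, ∃ n : ℕ, dist x y = (n : ℝ)) :
    ∃ c : X → ℕ, (∀ n : ℕ, BoundedD (dist : X → X → ℝ) (c ⁻¹' {n})) ∧
      ∀ M > (0 : ℝ), ∃ B : ℕ → Set X,
        (∀ n : ℕ, B n ⊆ c ⁻¹' {n}) ∧ (∀ n : ℕ, BoundedD (dist : X → X → ℝ) (B n)) ∧
        {n | (B n).Nonempty}.Finite ∧
        ∀ x y : X, c x ≠ c y → x ∉ B (c x) → y ∉ B (c y) → dist x y > M := by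
  obtain ⟨x0⟩ := ‹Nonempty X›
  set c : X → ℕ := fun x => (hint x x0).choose with hc
  have hcd : ∀ x : X, dist x x0 = (c x : ℝ) := fun x => (hint x x0).choose_spec
  -- key: if c x ≠ c y then dist x y ≥ max (c x) (c y)
  have key : ∀ x y : X, c x ≠ c y → (max (c x) (c y) : ℝ) ≤ dist x y := by
    intro x y hne
    rcases lt_or_gt_of_ne hne with h | h
    · have := hu y x x0
      rw [hcd y, hcd x, dist_comm y x] at this
      have hlt : (c x : ℝ) < (c y : ℝ) := by exact_mod_cast h
      have : (c y : ℝ) ≤ dist x y := by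
        rcases le_max_iff.mp this with h1 | h1
        · exact h1
        · linarith
      rw [max_le_iff]
      constructor
      · linarith
      · exact_mod_cast this
    · have := hu x y x0
      rw [hcd x, hcd y] at this
      have hlt : (c y : ℝ) < (c x : ℝ) := by exact_mod_cast h
      have : (c x : ℝ) ≤ dist x y := by
        rcases le_max_iff.mp this with h1 | h1
        · exact h1
        · linarith
      rw [max_le_iff]
      constructor
      · exact_mod_cast this
      · linarith
  refine ⟨c, ?_, ?_⟩
  · intro n
    refine ⟨n, ?_⟩
    intro x hx y hy
    simp only [Set.mem_preimage, Set.mem_singleton_iff] at hx hy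
    have := hu x x0 y
    rw [hcd x, dist_comm x0 y, hcd y, hx, hy, max_self] at this
    exact this
  · intro M hM
    refine ⟨fun n => if (n : ℝ) ≤ M then c ⁻¹' {n} else ∅, ?_, ?_, ?_, ?_⟩
    · intro n
      dsimp only
      split
      · exact fun x hx => hx
      · exact (Set.empty_subset _)
    · intro n
      dsimp only
      split
      · refine ⟨n, fun x hx y hy => ?_⟩
        simp only [Set.mem_preimage, Set.mem_singleton_iff] at hx hy
        have := hu x x0 y
        rw [hcd x, dist_comm x0 y, hcd y, hx, hy, max_self] at this
        exact this
      · exact ⟨0, fun x hx => absurd hx (Set.notMem_empty x)⟩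
    · apply Set.Finite.subset (Set.finite_Icc 0 ⌈M⌉₊)
      intro n hn
      simp only [Set.mem_setOf_eq] at hn
      simp only [Set.mem_Icc, Nat.zero_le, true_and]
      by_contra hmem
      have h2 : ¬ ((n : ℝ) ≤ M) := by
        intro h
        apply hmem
        exact_mod_cast h.trans (Nat.le_ceil M)
      rw [if_neg h2] at hn
      exact hn.ne_empty rfl
    · intro x y hne hx hy
      dsimp only at hx hy
      have hxn : ¬ ((c x : ℝ) ≤ M) := by
        intro h
        apply hx
        rw [if_pos h]
        exact rfl
      have := key x y hne
      have : (c x : ℝ) ≤ dist x y := le_trans (le_max_left _ _) this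
      linarith [lt_of_not_ge hxn]
end

section
/- If S is a countable set, then every family {(X_s, d_s)}_{s∈S} of nonempty metric spaces admits a coarse disjoint union, i.e., there is a metric d on the disjoint union ⨿_{s∈S} X_s making it a coarse disjoint union of the family. Moreover, if each d_s is an ultrametric (respectively, an integral ultrametric), then d can be chosen to be an ultrametric (respectively, an integral ultrametric). -/
section CDU

variable {S : Type*} {X : S → Type*}

/-- the metric of the coarse disjoint union -/
noncomputable def cduD (ds : ∀ s, X s → X s → ℝ) (p : ∀ s, X s) (ι : S → ℕ) :
    (Σ s, X s) → (Σ s, X s) → ℝ := fun a b =>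
  letI := Classical.decEq S
  if h : a.1 = b.1 then ds a.1 a.2 (cast (congrArg X h.symm) b.2)
  else max (ds a.1 a.2 (p a.1)) (max (((max (ι a.1) (ι b.1) : ℕ) : ℝ) + 1) (ds b.1 b.2 (p b.1)))

variable (ds : ∀ s, X s → X s → ℝ) (p : ∀ s, X s) (ι : S → ℕ)

lemma cduD_same (s : S) (x y : X s) : cduD ds p ι ⟨s, x⟩ ⟨s, y⟩ = ds s x y := by
  simp [cduD]

lemma cduD_ne {s t : S} (h : s ≠ t) (x : X s) (y : X t) :
    cduD ds p ι ⟨s, x⟩ ⟨t, y⟩ =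
      max (ds s x (p s)) (max (((max (ι s) (ι t) : ℕ) : ℝ) + 1) (ds t y (p t))) := by
  simp [cduD, h]

variable (hds : ∀ s, IsMetricD (ds s))
include hds

lemma cdu_nonneg (s : S) (x y : X s) : 0 ≤ ds s x y := by
  obtain ⟨h0, _, hsym, htri⟩ := hds s
  nlinarith [htri x y x, h0 x, hsym x y]

lemma cduD_metric : IsMetricD (cduD ds p ι) := by
  have nn := cdu_nonneg ds hds
  refine ⟨?_, ?_, ?_, ?_⟩
  · rintro ⟨s, x⟩; rw [cduD_same]; exact (hds s).1 x
  · rintro ⟨s, x⟩ ⟨t, y⟩ h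
    rcases eq_or_ne s t with rfl | hst
    · rw [cduD_same] at h
      exact congrArg _ ((hds s).2.1 x y h)
    · rw [cduD_ne _ _ _ hst] at h
      exfalso
      have h1 : (0:ℝ) < ((max (ι s) (ι t) : ℕ) : ℝ) + 1 := by positivity
      have := le_max_left (((max (ι s) (ι t) : ℕ) : ℝ) + 1) (ds t y (p t))
      have := le_max_right (ds s x (p s)) (max (((max (ι s) (ι t) : ℕ) : ℝ) + 1) (ds t y (p t)))
      linarith
  · rintro ⟨s, x⟩ ⟨t, y⟩
    rcases eq_or_ne s t with rfl | hst
    · rw [cduD_same, cduD_same]; exact (hds s).2.2.1 x y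
    · rw [cduD_ne _ _ _ hst, cduD_ne _ _ _ hst.symm, max_comm (ι t) (ι s)]
      rw [max_comm (ds s x (p s)), max_comm (ds t y (p t)), max_assoc, max_assoc,
        max_comm (ds s x (p s))]
  · have key : ∀ (s : S) (a b : X s), ds s a (p s) ≤ ds s a b + ds s b (p s) :=
      fun s a b => (hds s).2.2.2 a b (p s)
    have key2 : ∀ (s : S) (a b : X s), ds s b (p s) ≤ ds s a b + ds s a (p s) := by
      intro s a b
      have := (hds s).2.2.2 b a (p s)
      have := (hds s).2.2.1 a b
      linarith
    rintro ⟨s, a⟩ ⟨t, b⟩ ⟨u, c⟩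
    rcases eq_or_ne s t with rfl | hst <;> rcases eq_or_ne s u with rfl | hsu
    · -- s = t = u
      rw [cduD_same, cduD_same, cduD_same]; exact (hds s).2.2.2 a b c
    · -- s = t ≠ u
      rw [cduD_same, cduD_ne _ _ _ hsu, cduD_ne _ _ _ hsu]
      have h1 := key s a b
      have h2 := nn s a b
      apply max_le
      · calc ds s a (p s) ≤ ds s a b + ds s b (p s) := h1
          _ ≤ ds s a b + max (ds s b (p s)) _ := by gcongr; exact le_max_left _ _
      · have h3 : max (((max (ι s) (ι u) : ℕ) : ℝ) + 1) (ds u c (p u)) ≤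
            max (ds s b (p s)) (max (((max (ι s) (ι u) : ℕ) : ℝ) + 1) (ds u c (p u))) :=
          le_max_right _ _
        linarith
    · -- s ≠ t, s = u
      rw [cduD_same, cduD_ne _ _ _ hst, cduD_ne _ _ _ (Ne.symm hst)]
      have h1 : ds s a c ≤ ds s a (p s) + ds s c (p s) := by
        have := (hds s).2.2.2 a (p s) c
        have := (hds s).2.2.1 c (p s)
        linarith
      have h2 : ds s a (p s) ≤ max (ds s a (p s)) (max (((max (ι s) (ι t) : ℕ) : ℝ) + 1) (ds t b (p t))) := le_max_left _ _
      have h3 : ds s c (p s) ≤ max (ds t b (p t)) (max (((max (ι t) (ι s) : ℕ) : ℝ) + 1) (ds s c (p s))) := le_max_of_le_right (le_max_right _ _)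
      linarith
    · -- s ≠ t, s ≠ u
      rcases eq_or_ne t u with rfl | htu
      · -- t = u
        rw [cduD_ne _ _ _ hsu, cduD_ne _ _ _ hsu, cduD_same]
        have h1 := key2 t b c
        have h2 := nn t b c
        apply max_le
        · exact le_add_of_nonneg_right h2 |>.trans' (le_max_left _ _)
        · apply max_le
          · exact (le_max_of_le_right (le_max_left _ _)).trans (le_add_of_nonneg_right h2)
          · calc ds t c (p t) ≤ ds t b c + ds t b (p t) := h1
              _ ≤ max (ds s a (p s)) (max _ (ds t b (p t))) + ds t b c := by
                rw [add_comm]; gcongr; exact le_max_of_le_right (le_max_right _ _)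
      · -- all distinct
        rw [cduD_ne _ _ _ hsu, cduD_ne _ _ _ hst, cduD_ne _ _ _ htu]
        have nA : 0 ≤ ds s a (p s) := nn s a (p s)
        have nB : 0 ≤ ds t b (p t) := nn t b (p t)
        have nC : 0 ≤ ds u c (p u) := nn u c (p u)
        have w1 : ((max (ι s) (ι u) : ℕ) : ℝ) + 1 ≤
            (((max (ι s) (ι t) : ℕ) : ℝ) + 1) + (((max (ι t) (ι u) : ℕ) : ℝ) + 1) := by
          push_cast
          have := le_max_left (ι s) (ι t)
          have := le_max_right (ι t) (ι u)
          have : (max (ι s) (ι u) : ℕ) ≤ max (ι s) (ι t) + max (ι t) (ι u) := by omega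
          have := Nat.cast_le (α := ℝ) |>.2 this
          push_cast at this
          linarith
        have wnn1 : (0:ℝ) ≤ ((max (ι s) (ι t) : ℕ) : ℝ) + 1 := by positivity
        have wnn2 : (0:ℝ) ≤ ((max (ι t) (ι u) : ℕ) : ℝ) + 1 := by positivity
        have RA : ds s a (p s) ≤ max (ds s a (p s)) (max (((max (ι s) (ι t) : ℕ) : ℝ) + 1) (ds t b (p t))) := le_max_left _ _
        have RW1 : (((max (ι s) (ι t) : ℕ) : ℝ) + 1) ≤ max (ds s a (p s)) (max (((max (ι s) (ι t) : ℕ) : ℝ) + 1) (ds t b (p t))) := le_max_of_le_right (le_max_left _ _)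
        have RW2 : (((max (ι t) (ι u) : ℕ) : ℝ) + 1) ≤ max (ds t b (p t)) (max (((max (ι t) (ι u) : ℕ) : ℝ) + 1) (ds u c (p u))) := le_max_of_le_right (le_max_left _ _)
        have RC : ds u c (p u) ≤ max (ds t b (p t)) (max (((max (ι t) (ι u) : ℕ) : ℝ) + 1) (ds u c (p u))) := le_max_of_le_right (le_max_right _ _)
        have LHSnn : (0:ℝ) ≤ max (ds t b (p t)) (max (((max (ι t) (ι u) : ℕ) : ℝ) + 1) (ds u c (p u))) := le_trans nB (le_max_left _ _)
        have LHSnn2 : (0:ℝ) ≤ max (ds s a (p s)) (max (((max (ι s) (ι t) : ℕ) : ℝ) + 1) (ds t b (p t))) := le_trans nA (le_max_left _ _)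
        apply max_le
        · linarith
        · apply max_le
          · linarith
          · linarith

lemma cduD_cdu (hι : Function.Injective ι) : IsCoarseDisjointUnion ds (cduD ds p ι) := by
  have nn := cdu_nonneg ds hds
  refine ⟨fun s x y => cduD_same ds p ι s x y, fun M hM => ?_⟩
  set N := ⌈M⌉₊ with hN
  refine ⟨fun s => {x | ι s ≤ N ∧ ds s x (p s) ≤ M}, ?_, ?_, ?_⟩
  · intro s
    refine ⟨M + M, fun x hx y hy => ?_⟩
    have h1 : ds s x y ≤ ds s x (p s) + ds s y (p s) := by
      have := (hds s).2.2.2 x (p s) y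
      have := (hds s).2.2.1 y (p s)
      linarith
    exact h1.trans (add_le_add hx.2 hy.2)
  · apply Set.Finite.subset ((Set.finite_Iic N).preimage hι.injOn)
    rintro s ⟨x, hx⟩
    exact hx.1
  · intro s t x y hst hx hy
    rw [cduD_ne _ _ _ hst]
    simp only [Set.mem_setOf_eq, not_and_or, not_le] at hx hy
    rcases hx with hx | hx
    · have : M < ((max (ι s) (ι t) : ℕ) : ℝ) + 1 := by
        have h1 : M ≤ (N : ℝ) := Nat.le_ceil M
        have h2 : (N : ℝ) < (ι s : ℝ) := by exact_mod_cast hx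
        have h3 : ((ι s : ℕ) : ℝ) ≤ ((max (ι s) (ι t) : ℕ) : ℝ) := by
          exact_mod_cast le_max_left (ι s) (ι t)
        linarith
      exact lt_of_lt_of_le this (le_max_of_le_right (le_max_left _ _))
    rcases hy with hy | hy
    · have : M < ((max (ι s) (ι t) : ℕ) : ℝ) + 1 := by
        have h1 : M ≤ (N : ℝ) := Nat.le_ceil M
        have h2 : (N : ℝ) < (ι t : ℝ) := by exact_mod_cast hy
        have h3 : ((ι t : ℕ) : ℝ) ≤ ((max (ι s) (ι t) : ℕ) : ℝ) := by
          exact_mod_cast le_max_right (ι s) (ι t)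
        linarith
      exact lt_of_lt_of_le this (le_max_of_le_right (le_max_left _ _))
    · exact lt_of_lt_of_le hy (le_max_of_le_right (le_max_right _ _))

lemma cduD_ultra (hu : ∀ s, IsUltraD (ds s)) : IsUltraD (cduD ds p ι) := by
  have nn := cdu_nonneg ds hds
  have key : ∀ (s : S) (a b : X s), ds s a (p s) ≤ max (ds s a b) (ds s b (p s)) :=
    fun s a b => hu s a b (p s)
  have key2 : ∀ (s : S) (a b : X s), ds s b (p s) ≤ max (ds s a b) (ds s a (p s)) := by
    intro s a b
    have h := hu s b a (p s)
    have hsym : ds s b a = ds s a b := (hds s).2.2.1 b a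
    rw [hsym] at h
    exact h
  rintro ⟨s, a⟩ ⟨t, b⟩ ⟨u, c⟩
  rcases eq_or_ne s t with rfl | hst <;> rcases eq_or_ne s u with rfl | hsu
  · rw [cduD_same, cduD_same, cduD_same]; exact hu s a b c
  · rw [cduD_same, cduD_ne _ _ _ hsu, cduD_ne _ _ _ hsu]
    apply max_le
    · exact (key s a b).trans (max_le (le_max_left _ _)
        (le_max_of_le_right (le_max_left _ _)))
    · apply max_le
      · exact le_max_of_le_right (le_max_of_le_right (le_max_left _ _))
      · exact le_max_of_le_right (le_max_of_le_right (le_max_right _ _))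
  · rw [cduD_same, cduD_ne _ _ _ hst, cduD_ne _ _ _ (Ne.symm hst)]
    have h1 : ds s a c ≤ max (ds s a (p s)) (ds s c (p s)) := by
      have h := hu s a (p s) c
      have hsym : ds s (p s) c = ds s c (p s) := (hds s).2.2.1 (p s) c
      rw [hsym] at h
      exact h
    exact h1.trans (max_le (le_max_of_le_left (le_max_left _ _))
      (le_max_of_le_right (le_max_of_le_right (le_max_right _ _))))
  · rcases eq_or_ne t u with rfl | htu
    · rw [cduD_ne _ _ _ hsu, cduD_ne _ _ _ hsu, cduD_same]
      apply max_le
      · exact le_max_of_le_left (le_max_left _ _)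
      · apply max_le
        · exact le_max_of_le_left (le_max_of_le_right (le_max_left _ _))
        · exact (key2 t b c).trans (max_le (le_max_right _ _)
            (le_max_of_le_left (le_max_of_le_right (le_max_right _ _))))
    · rw [cduD_ne _ _ _ hsu, cduD_ne _ _ _ hst, cduD_ne _ _ _ htu]
      have w1 : ((max (ι s) (ι u) : ℕ) : ℝ) ≤
          max ((max (ι s) (ι t) : ℕ) : ℝ) ((max (ι t) (ι u) : ℕ) : ℝ) := by
        rw [← Nat.cast_max]
        exact_mod_cast max_le
          (le_max_of_le_left (le_max_left _ _))
          (le_max_of_le_right (le_max_right _ _))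
      apply max_le
      · exact le_max_of_le_left (le_max_left _ _)
      · apply max_le
        · rcases le_total ((max (ι s) (ι t) : ℕ) : ℝ) ((max (ι t) (ι u) : ℕ) : ℝ) with h | h
          · refine le_max_of_le_right ?_
            refine le_max_of_le_right (le_max_of_le_left ?_)
            have := w1.trans (max_le h le_rfl)
            linarith
          · refine le_max_of_le_left ?_
            refine le_max_of_le_right (le_max_of_le_left ?_)
            have := w1.trans (max_le le_rfl h)
            linarith
        · exact le_max_of_le_right (le_max_of_le_right (le_max_right _ _))

lemma cduD_int (hint : ∀ (s : S) (x y : X s), ∃ n : ℕ, ds s x y = (n : ℝ)) :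
    ∀ a b : Σ s, X s, ∃ n : ℕ, cduD ds p ι a b = (n : ℝ) := by
  rintro ⟨s, x⟩ ⟨t, y⟩
  rcases eq_or_ne s t with rfl | hst
  · rw [cduD_same]; exact hint s x y
  · rw [cduD_ne _ _ _ hst]
    obtain ⟨n1, h1⟩ := hint s x (p s)
    obtain ⟨n2, h2⟩ := hint t y (p t)
    refine ⟨max n1 (max (max (ι s) (ι t) + 1) n2), ?_⟩
    rw [h1, h2]
    push_cast
    rfl

end CDU

/-- Any countably indexed family of nonempty metric spaces admits a coarse
disjoint union; moreover if all the metrics are ultrametrics (resp. integral ultrametrics),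
the coarse disjoint union can be chosen to be an ultrametric (resp. integral ultrametric)
space. -/
theorem coarse_disjoint_union_exists
    {S : Type*} [Countable S] {X : S → Type*} (hne : ∀ s : S, Nonempty (X s))
    (ds : ∀ s, X s → X s → ℝ) (hds : ∀ s, IsMetricD (ds s)) :
    (∃ d : (Σ s, X s) → (Σ s, X s) → ℝ, IsMetricD d ∧ IsCoarseDisjointUnion ds d) ∧
    ((∀ s, IsUltraD (ds s)) →
      ∃ d : (Σ s, X s) → (Σ s, X s) → ℝ, IsMetricD d ∧ IsUltraD d ∧
        IsCoarseDisjointUnion ds d) ∧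
    ((∀ s, IsUltraD (ds s)) → (∀ (s : S) (x y : X s), ∃ n : ℕ, ds s x y = (n : ℝ)) →
      ∃ d : (Σ s, X s) → (Σ s, X s) → ℝ, IsMetricD d ∧ IsUltraD d ∧
        (∀ p q : Σ s, X s, ∃ n : ℕ, d p q = (n : ℝ)) ∧
        IsCoarseDisjointUnion ds d) := by
  obtain ⟨ι, hι⟩ := Countable.exists_injective_nat S
  have p : ∀ s, X s := fun s => (hne s).some
  refine ⟨⟨cduD ds p ι, cduD_metric ds p ι hds, cduD_cdu ds p ι hds hι⟩,
    fun hu => ⟨cduD ds p ι, cduD_metric ds p ι hds, cduD_ultra ds p ι hds hu,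
      cduD_cdu ds p ι hds hι⟩,
    fun hu hint => ⟨cduD ds p ι, cduD_metric ds p ι hds, cduD_ultra ds p ι hds hu,
      cduD_int ds p ι hds hint, cduD_cdu ds p ι hds hι⟩⟩
end

section
/- For every finite set D of nonnegative integers containing 0 and every m ≥ 1, there exists a finite D-ultrametric space FU(m, D) such that every D-ultrametric space X with at most m points admits an isometric embedding into FU(m, D). -/
namespace FUaux

/-- valid D-valued ultrametric matrix on `Fin m`. -/
def Valid (D : Finset ℕ) (m : ℕ) (M : Fin m → Fin m → {n : ℕ // n ∈ D}) : Prop :=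
  (∀ i, (M i i : ℕ) = 0) ∧ (∀ i j, (M i j : ℕ) = 0 → i = j) ∧
  (∀ i j, M i j = M j i) ∧
  (∀ i j k, (M i k : ℕ) ≤ max (M i j : ℕ) (M j k : ℕ))

def FU (D : Finset ℕ) (m : ℕ) : Type :=
  {M : Fin m → Fin m → {n : ℕ // n ∈ D} // Valid D m M} × Fin m

instance (D : Finset ℕ) (m : ℕ) : Finite (FU D m) := by
  haveI : Fintype {n : ℕ // n ∈ D} := FinsetCoe.fintype D
  unfold FU
  infer_instance

noncomputable def dFU (D : Finset ℕ) (hD : D.Nonempty) (m : ℕ) (x y : FU D m) : ℝ :=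
  if x.1 = y.1 then ((x.1.1 x.2 y.2 : ℕ) : ℝ) else (D.max' hD : ℝ)

variable (D : Finset ℕ) (hD : D.Nonempty) (m : ℕ)

lemma dFU_nonneg (x y : FU D m) : 0 ≤ dFU D hD m x y := by
  unfold dFU; split <;> positivity

lemma dFU_le (x y : FU D m) : dFU D hD m x y ≤ (D.max' hD : ℝ) := by
  unfold dFU; split
  · exact_mod_cast D.le_max' _ (x.1.1 x.2 y.2).2
  · exact le_refl _

lemma dFU_self (x : FU D m) : dFU D hD m x x = 0 := by
  unfold dFU
  rw [if_pos rfl, x.1.2.1 x.2, Nat.cast_zero]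

lemma dFU_symm (x y : FU D m) : dFU D hD m x y = dFU D hD m y x := by
  unfold dFU
  rcases eq_or_ne x.1 y.1 with h | h
  · rw [if_pos h, if_pos h.symm]
    have : y.1.1 y.2 x.2 = x.1.1 y.2 x.2 := by rw [h]
    rw [this, x.1.2.2.2.1 x.2 y.2]
  · rw [if_neg h, if_neg (Ne.symm h)]

lemma dFU_eq_zero (h0 : (0:ℕ) < D.max' hD) (x y : FU D m)
    (h : dFU D hD m x y = 0) : x = y := by
  unfold dFU at h
  split at h
  · rename_i hc
    have : (x.1.1 x.2 y.2 : ℕ) = 0 := by exact_mod_cast h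
    have h2 := x.1.2.2.1 x.2 y.2 this
    exact Prod.ext hc h2
  · exfalso
    have : (D.max' hD : ℕ) = 0 := by exact_mod_cast h
    omega

lemma dFU_ultra (x y z : FU D m) :
    dFU D hD m x z ≤ max (dFU D hD m x y) (dFU D hD m y z) := by
  rcases eq_or_ne x.1 z.1 with hxz | hxz
  · rcases eq_or_ne x.1 y.1 with hxy | hxy
    · have hyz : y.1 = z.1 := hxy ▸ hxz
      unfold dFU
      rw [if_pos hxz, if_pos hxy, if_pos hyz]
      have h1 : y.1.1 y.2 z.2 = x.1.1 y.2 z.2 := by rw [hxy]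
      rw [h1]
      have := x.1.2.2.2.2 x.2 y.2 z.2
      rw [← Nat.cast_max]
      exact_mod_cast this
    · have hyz : y.1 ≠ z.1 := fun h => hxy (hxz ▸ h.symm ▸ rfl)
      calc dFU D hD m x z ≤ (D.max' hD : ℝ) := dFU_le D hD m x z
        _ = dFU D hD m y z := by unfold dFU; rw [if_neg hyz]
        _ ≤ _ := le_max_right _ _
  · rcases eq_or_ne x.1 y.1 with hxy | hxy
    · have hyz : y.1 ≠ z.1 := fun h => hxz (hxy.trans h)
      have : dFU D hD m x z = dFU D hD m y z := by
        unfold dFU; rw [if_neg hxz, if_neg hyz]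
      rw [this]; exact le_max_right _ _
    · have : dFU D hD m x z = dFU D hD m x y := by
        unfold dFU; rw [if_neg hxz, if_neg hxy]
      rw [this]; exact le_max_left _ _


lemma embed (D : Finset ℕ) (hD0 : 0 ∈ D) (m : ℕ)
    (hL : D.max' ⟨0, hD0⟩ ≠ 0)
    {Z : Type u} (dZ : Z → Z → ℝ) (hM : IsMetricD dZ) (hU : IsUltraD dZ)
    (hDv : ∀ a b : Z, ∃ n ∈ D, dZ a b = (n : ℝ)) (hfin : Finite Z)
    (hcard : Nat.card Z ≤ m) :
    ∃ e : Z → FU D m, ∀ a b, dFU D ⟨0, hD0⟩ m (e a) (e b) = dZ a b := by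
  classical
  haveI := hfin
  set L : ℕ := D.max' ⟨0, hD0⟩ with hLdef
  have hLmem : L ∈ D := D.max'_mem _
  -- the ℕ-valued distance
  let nd : Z → Z → {n : ℕ // n ∈ D} := fun a b => ⟨(hDv a b).choose, (hDv a b).choose_spec.1⟩
  have hnd : ∀ a b, ((nd a b : ℕ) : ℝ) = dZ a b := fun a b => ((hDv a b).choose_spec.2).symm
  have hnd_self : ∀ a, nd a a = ⟨0, hD0⟩ := by
    intro a
    apply Subtype.ext
    have h1 := hnd a a
    rw [hM.1 a] at h1
    exact (by exact_mod_cast h1 : ((nd a a : ℕ)) = 0)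
  have hnd_symm : ∀ a b, nd a b = nd b a := by
    intro a b
    apply Subtype.ext
    have h1 := hnd a b
    have h2 := hnd b a
    rw [hM.2.2.1 a b] at h1
    have : ((nd a b : ℕ) : ℝ) = ((nd b a : ℕ) : ℝ) := h1.trans h2.symm
    exact_mod_cast this
  have hnd_ne : ∀ a b, a ≠ b → (nd a b : ℕ) ≠ 0 := by
    intro a b hab h0
    apply hab
    apply hM.2.1 a b
    rw [← hnd a b, h0, Nat.cast_zero]
  have hnd_ultra : ∀ a b c, (nd a c : ℕ) ≤ max (nd a b : ℕ) (nd b c : ℕ) := by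
    intro a b c
    have h1 := hU a b c
    rw [← hnd a c, ← hnd a b, ← hnd b c, ← Nat.cast_max] at h1
    exact_mod_cast h1
  -- the injection into Fin m
  let e0 := Finite.equivFin Z
  let ι : Z → Fin m := fun z => Fin.castLE hcard (e0 z)
  have hι : Function.Injective ι :=
    (Fin.castLE_injective hcard).comp e0.injective
  -- the matrix
  let M : Fin m → Fin m → {n : ℕ // n ∈ D} := fun i j =>
    if i = j then ⟨0, hD0⟩
    else if h : (∃ a, ι a = i) ∧ (∃ b, ι b = j) then nd h.1.choose h.2.choose
    else ⟨L, hLmem⟩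
  have hMι : ∀ a b, M (ι a) (ι b) = nd a b := by
    intro a b
    by_cases h : ι a = ι b
    · have hab : a = b := hι h
      subst hab
      show (if ι a = ι a then _ else _) = _
      rw [if_pos rfl, hnd_self a]
    · have hp : (∃ x, ι x = ι a) ∧ (∃ x, ι x = ι b) := ⟨⟨a, rfl⟩, ⟨b, rfl⟩⟩
      show (if ι a = ι b then _ else _) = _
      rw [if_neg h, dif_pos hp]
      have h1 : hp.1.choose = a := hι hp.1.choose_spec
      have h2 : hp.2.choose = b := hι hp.2.choose_spec
      rw [h1, h2]
  have hM_out1 : ∀ i j, i ≠ j → ¬(∃ a, ι a = i) → M i j = ⟨L, hLmem⟩ := by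
    intro i j hij hi
    show (if i = j then _ else _) = _
    rw [if_neg hij, dif_neg (fun h => hi h.1)]
  have hM_out2 : ∀ i j, i ≠ j → ¬(∃ b, ι b = j) → M i j = ⟨L, hLmem⟩ := by
    intro i j hij hj
    show (if i = j then _ else _) = _
    rw [if_neg hij, dif_neg (fun h => hj h.2)]
  have hM_self : ∀ i, M i i = ⟨0, hD0⟩ := by
    intro i
    show (if i = i then _ else _) = _
    rw [if_pos rfl]
  have hub : ∀ i j, (M i j : ℕ) ≤ L := fun i j => D.le_max' _ (M i j).2
  have hV : Valid D m M := by
    refine ⟨fun i => by rw [hM_self i], ?_, ?_, ?_⟩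
    · -- separation
      intro i j h0
      by_contra hij
      by_cases hp : (∃ a, ι a = i) ∧ (∃ b, ι b = j)
      · obtain ⟨⟨a, ha⟩, ⟨b, hb⟩⟩ := hp
        subst ha; subst hb
        have hab : a ≠ b := fun h => hij (by rw [h])
        rw [hMι a b] at h0
        exact hnd_ne a b hab h0
      · have : M i j = ⟨L, hLmem⟩ := by
          show (if i = j then _ else _) = _
          rw [if_neg hij, dif_neg hp]
        rw [this] at h0
        exact hL h0
    · -- symmetry
      intro i j
      by_cases hij : i = j
      · subst hij; rfl
      · by_cases hp : (∃ a, ι a = i) ∧ (∃ b, ι b = j)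
        · obtain ⟨⟨a, ha⟩, ⟨b, hb⟩⟩ := hp
          subst ha; subst hb
          rw [hMι a b, hMι b a, hnd_symm a b]
        · have h1 : M i j = ⟨L, hLmem⟩ := by
            show (if i = j then _ else _) = _
            rw [if_neg hij, dif_neg hp]
          have h2 : M j i = ⟨L, hLmem⟩ := by
            show (if j = i then _ else _) = _
            rw [if_neg (Ne.symm hij), dif_neg (fun h => hp ⟨h.2, h.1⟩)]
          rw [h1, h2]
    · -- ultrametric inequality
      intro i j k
      by_cases hik : i = k
      · subst hik
        rw [hM_self i]
        exact Nat.zero_le _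
      · by_cases hi : ∃ a, ι a = i
        · by_cases hk : ∃ b, ι b = k
          · obtain ⟨a, ha⟩ := hi
            obtain ⟨b, hb⟩ := hk
            subst ha; subst hb
            by_cases hj : ∃ c, ι c = j
            · obtain ⟨c, hc⟩ := hj
              subst hc
              rw [hMι a b, hMι a c, hMι c b]
              exact hnd_ultra a c b
            · have hij : ι a ≠ j := fun h => hj ⟨a, h⟩
              rw [hM_out2 (ι a) j hij hj]
              exact le_trans (hub _ _) (le_max_left _ _)
          · -- k not in range
            have hMik : M i k = ⟨L, hLmem⟩ := hM_out2 i k hik hk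
            by_cases hjk : j = k
            · subst hjk
              rw [hMik]
              exact le_max_left _ _
            · rw [hMik, hM_out2 j k hjk hk]
              exact le_max_right _ _
        · -- i not in range
          have hMik : M i k = ⟨L, hLmem⟩ := hM_out1 i k hik hi
          by_cases hij : i = j
          · subst hij
            rw [hMik]
            exact le_max_right _ _
          · rw [hMik, hM_out1 i j hij hi]
            exact le_max_left _ _
  refine ⟨fun z => (⟨M, hV⟩, ι z), ?_⟩
  intro a b
  show dFU D ⟨0, hD0⟩ m (⟨M, hV⟩, ι a) (⟨M, hV⟩, ι b) = dZ a b
  unfold dFU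
  rw [if_pos rfl]
  show ((M (ι a) (ι b) : ℕ) : ℝ) = dZ a b
  rw [hMι a b, hnd a b]


end FUaux

/-- For every finite set `D` of nonnegative integers containing `0` and
every `m ≥ 1` there is a finite `D`-ultrametric space `FU(m, D)` into which every
`D`-ultrametric space with at most `m` points isometrically embeds. -/
theorem finite_universal_D_ultrametric_space
    (D : Finset ℕ) (hD : 0 ∈ D) (m : ℕ) (hm : 1 ≤ m) :
    ∃ (F : Type) (dF : F → F → ℝ), Finite F ∧ IsMetricD dF ∧ IsUltraD dF ∧
      (∀ a b : F, ∃ n ∈ D, dF a b = (n : ℝ)) ∧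
      ∀ (Z : Type u) (dZ : Z → Z → ℝ), IsMetricD dZ → IsUltraD dZ →
        (∀ a b : Z, ∃ n ∈ D, dZ a b = (n : ℝ)) → Finite Z → Nat.card Z ≤ m →
        ∃ e : Z → F, ∀ a b : Z, dF (e a) (e b) = dZ a b := by
  classical
  by_cases hL0 : D.max' ⟨0, hD⟩ = 0
  · refine ⟨Unit, fun _ _ => 0, inferInstance,
      ⟨fun _ => rfl, fun x y _ => Subsingleton.elim x y, fun _ _ => rfl,
        fun _ _ _ => by norm_num⟩,
      fun _ _ _ => by simp, fun _ _ => ⟨0, hD, by simp⟩, ?_⟩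
    intro Z dZ hMZ hUZ hDZ _ _
    refine ⟨fun _ => (), fun a b => ?_⟩
    obtain ⟨n, hn, he⟩ := hDZ a b
    have h1 : n ≤ D.max' ⟨0, hD⟩ := D.le_max' _ hn
    rw [hL0] at h1
    have h2 : n = 0 := by omega
    rw [he, h2]
    simp
  · have h0 : (0:ℕ) < D.max' ⟨0, hD⟩ := Nat.pos_of_ne_zero hL0
    refine ⟨FUaux.FU D m, FUaux.dFU D ⟨0, hD⟩ m, inferInstance,
      ⟨FUaux.dFU_self D ⟨0, hD⟩ m, FUaux.dFU_eq_zero D ⟨0, hD⟩ m h0,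
        FUaux.dFU_symm D ⟨0, hD⟩ m,
        fun x y z => (FUaux.dFU_ultra D ⟨0, hD⟩ m x y z).trans
          (max_le (le_add_of_nonneg_right (FUaux.dFU_nonneg D ⟨0, hD⟩ m y z))
            (le_add_of_nonneg_left (FUaux.dFU_nonneg D ⟨0, hD⟩ m x y)))⟩,
      FUaux.dFU_ultra D ⟨0, hD⟩ m, ?_, ?_⟩
    · intro a b
      unfold FUaux.dFU
      split
      · exact ⟨(a.1.1 a.2 b.2 : ℕ), (a.1.1 a.2 b.2).2, rfl⟩
      · exact ⟨D.max' ⟨0, hD⟩, D.max'_mem _, rfl⟩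
    · intro Z dZ hMZ hUZ hDZ hfin hcard
      exact FUaux.embed D hD m hL0 dZ hMZ hUZ hDZ hfin hcard
end

section
/- There exists a countable integral ultrametric space CU such that every countable integral ultrametric space admits an isometric embedding into CU. -/
noncomputable def dCU (σ τ : ℕ →₀ ℕ) : ℝ :=
  if σ = τ then 0 else (((σ.neLocus τ).sup id + 1 : ℕ) : ℝ)

lemma dCU_nonneg (σ τ : ℕ →₀ ℕ) : 0 ≤ dCU σ τ := by
  unfold dCU; split <;> positivity

lemma dCU_self (σ : ℕ →₀ ℕ) : dCU σ σ = 0 := by simp [dCU]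

lemma dCU_comm (σ τ : ℕ →₀ ℕ) : dCU σ τ = dCU τ σ := by
  unfold dCU
  rw [Finsupp.neLocus_comm]
  by_cases h : σ = τ <;> simp [h, Ne.symm, eq_comm]

lemma dCU_ultra : IsUltraD dCU := by
  intro σ τ υ
  by_cases hsu : σ = υ
  · subst hsu; rw [dCU_self]; exact le_max_of_le_left (dCU_nonneg _ _)
  by_cases hst : σ = τ
  · subst hst; exact le_max_right _ _
  by_cases htu : τ = υ
  · subst htu; exact le_max_left _ _
  unfold dCU
  simp only [hsu, hst, htu, if_false]
  rw [← Nat.cast_max]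
  refine Nat.cast_le.mpr ?_
  have key : (σ.neLocus υ).sup id ≤ max ((σ.neLocus τ).sup id) ((τ.neLocus υ).sup id) := by
    refine Finset.sup_le fun n hn => ?_
    rw [Finsupp.mem_neLocus] at hn
    by_cases h1 : σ n = τ n
    · have : n ∈ τ.neLocus υ := Finsupp.mem_neLocus.mpr (h1 ▸ hn)
      exact le_max_of_le_right (Finset.le_sup (f := id) this)
    · exact le_max_of_le_left (Finset.le_sup (f := id) (Finsupp.mem_neLocus.mpr h1))
  omega


/-- There is a countable integral ultrametric space `CU` into which every
countable integral ultrametric space isometrically embeds. -/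
theorem countable_universal_integral_ultrametric_space :
    ∃ (CU : Type) (dC : CU → CU → ℝ), Countable CU ∧ IsMetricD dC ∧ IsUltraD dC ∧
      (∀ a b : CU, ∃ n : ℕ, dC a b = (n : ℝ)) ∧
      ∀ (Z : Type u) (dZ : Z → Z → ℝ), Countable Z → IsMetricD dZ → IsUltraD dZ →
        (∀ a b : Z, ∃ n : ℕ, dZ a b = (n : ℝ)) →
        ∃ e : Z → CU, ∀ a b : Z, dC (e a) (e b) = dZ a b := by
  classical
  refine ⟨ℕ →₀ ℕ, dCU, inferInstance, ⟨dCU_self, ?_, dCU_comm, ?_⟩, dCU_ultra, ?_, ?_⟩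
  · intro x y h
    by_contra hne
    rw [dCU, if_neg hne] at h
    exact_mod_cast h
  · intro x y z
    exact (dCU_ultra x y z).trans
      (max_le_add_of_nonneg (dCU_nonneg _ _) (dCU_nonneg _ _))
  · intro a b
    unfold dCU; split
    · exact ⟨0, by simp⟩
    · exact ⟨_, rfl⟩
  · intro Z dZ hcount hmet hultra hint
    obtain ⟨hself, hsep, hsymm, htri⟩ := hmet
    by_cases hne : Nonempty Z
    · obtain ⟨f, hf⟩ := exists_surjective_nat Z
      have hz : ∀ (z : Z) (n : ℕ), ∃ i, dZ z (f i) ≤ (n : ℝ) := by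
        intro z n
        obtain ⟨i, hi⟩ := hf z
        exact ⟨i, by rw [hi, hself]; positivity⟩
      set g : Z → ℕ → ℕ := fun z n => Nat.find (hz z n) with hg
      have hgspec : ∀ (z : Z) (n : ℕ), dZ z (f (g z n)) ≤ (n : ℝ) :=
        fun z n => Nat.find_spec (hz z n)
      have key : ∀ (a b : Z) (n : ℕ), g a n = g b n ↔ dZ a b ≤ (n : ℝ) := by
        intro a b n
        constructor
        · intro h
          have ha := hgspec a n
          have hb := hgspec b n
          rw [h] at ha
          calc dZ a b ≤ max (dZ a (f (g b n))) (dZ (f (g b n)) b) := hultra _ _ _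
            _ ≤ n := max_le ha (by rw [hsymm]; exact hb)
        · intro hab
          have equiv : ∀ i : ℕ, dZ a (f i) ≤ (n : ℝ) ↔ dZ b (f i) ≤ (n : ℝ) := by
            intro i
            constructor <;> intro h
            · calc dZ b (f i) ≤ max (dZ b a) (dZ a (f i)) := hultra _ _ _
                _ ≤ n := max_le (by rw [hsymm]; exact hab) h
            · calc dZ a (f i) ≤ max (dZ a b) (dZ b (f i)) := hultra _ _ _
                _ ≤ n := max_le hab h
          exact le_antisymm (Nat.find_le ((equiv _).mpr (hgspec b n)))
            (Nat.find_le ((equiv _).mp (hgspec a n)))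
      choose N hN using fun z => hint z (f 0)
      have hsupp : ∀ (z : Z) (n : ℕ), g z n ≠ 0 → n ∈ Finset.range (N z) := by
        intro z n h
        rw [Finset.mem_range]
        by_contra hc
        push_neg at hc
        exact h (Nat.find_eq_zero (hz z n) |>.mpr (by rw [hN z]; exact_mod_cast hc))
      set e : Z → (ℕ →₀ ℕ) := fun z => Finsupp.onFinset (Finset.range (N z)) (g z) (hsupp z)
        with he
      refine ⟨e, fun a b => ?_⟩
      obtain ⟨m, hm⟩ := hint a b
      have hloc : (e a).neLocus (e b) = Finset.range m := by
        ext n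
        rw [Finsupp.mem_neLocus, Finset.mem_range]
        simp only [he, Finsupp.onFinset_apply]
        rw [← not_iff_not, not_not, not_lt, key, hm, Nat.cast_le]
      rcases Nat.eq_zero_or_pos m with h0 | hpos
      · have hab : a = b := hsep a b (by rw [hm, h0]; simp)
        rw [hab, dCU_self, hself]
      · have hne2 : e a ≠ e b := by
          intro h
          have : (0 : ℕ) ∈ (e a).neLocus (e b) := by
            rw [hloc, Finset.mem_range]; exact hpos
          rw [h] at this
          rw [Finsupp.mem_neLocus] at this
          exact this rfl
        rw [dCU, if_neg hne2, hloc, hm]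
        have hsup : (Finset.range m).sup id = m - 1 := by
          refine le_antisymm (Finset.sup_le fun i hi => ?_) ?_
          · rw [Finset.mem_range] at hi; simp only [id]; omega
          · exact Finset.le_sup (f := id) (Finset.mem_range.mpr (by omega))
        rw [hsup]
        congr 1
        omega
    · exact ⟨fun z => absurd ⟨z⟩ hne, fun a b => absurd ⟨a⟩ hne⟩
end

section
/- There exists a countable integral ultrametric space CU such that every separable metric space of asymptotic dimension 0 admits a coarse embedding into CU. -/
namespace UnivAux

lemma chain_mono {Z : Type*} {d : Z → Z → ℝ} {r r' : ℝ} (h : r ≤ r') {a b : Z}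
    (hc : ChainD d r a b) : ChainD d r' a b := by
  obtain ⟨k, c, h0, hk, hs⟩ := hc
  exact ⟨k, c, h0, hk, fun i hi => lt_of_lt_of_le (hs i hi) h⟩

lemma chain_single {Z : Type*} {d : Z → Z → ℝ} {r : ℝ} {a b : Z} (h : d a b < r) :
    ChainD d r a b := by
  refine ⟨1, fun i => if i = 0 then a else b, by simp, by simp, ?_⟩
  intro i hi
  interval_cases i
  simpa using h

lemma chain_symm {Z : Type*} {d : Z → Z → ℝ} (hd : ∀ x y, d x y = d y x) {r : ℝ} {a b : Z}
    (hc : ChainD d r a b) : ChainD d r b a := by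
  obtain ⟨k, c, h0, hk, hs⟩ := hc
  refine ⟨k, fun i => c (k - i), by simp [hk], by simp [h0], ?_⟩
  intro i hi
  show d (c (k - i)) (c (k - (i + 1))) < r
  have h1 : k - i = (k - (i + 1)) + 1 := by omega
  rw [h1, hd]
  exact hs _ (by omega)

lemma chain_trans {Z : Type*} {d : Z → Z → ℝ} {r : ℝ} {a b e : Z}
    (h1 : ChainD d r a b) (h2 : ChainD d r b e) : ChainD d r a e := by
  obtain ⟨k, c, c0, ck, cs⟩ := h1
  obtain ⟨k', c', c0', ck', cs'⟩ := h2
  refine ⟨k + k', fun i => if i < k then c i else c' (i - k), ?_, ?_, ?_⟩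
  · by_cases h : 0 < k
    · simpa [h] using c0
    · have hk0 : k = 0 := by omega
      have hab : a = b := by rw [← c0, ← hk0, ck]
      simp [hk0, c0', hab]
  · have hlt : ¬ (k + k' < k) := by omega
    simp only [hlt, if_false]
    rw [Nat.add_sub_cancel_left]; exact ck'
  · intro i hi
    by_cases h : i < k
    · simp only [h, if_true]
      by_cases h2 : i + 1 < k
      · simp only [h2, if_true]; exact cs i h
      · simp only [h2, if_false]
        have heq : c' (i + 1 - k) = c (i + 1) := by
          rw [show i + 1 - k = 0 from by omega, c0', show i + 1 = k from by omega, ck]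
        rw [heq]; exact cs i h
    · have h2 : ¬ (i + 1 < k) := by omega
      simp only [h, h2, if_false]
      rw [show i + 1 - k = (i - k) + 1 from by omega]
      exact cs' (i - k) (by omega)

open Classical in
noncomputable def du {Z : Type*} (d : Z → Z → ℝ) (x y : Z) : ℝ :=
  if x = y then 0 else ((sInf {r : ℕ | 1 ≤ r ∧ ChainD d (r : ℝ) x y} : ℕ) : ℝ)

variable {Z : Type*} [MetricSpace Z]

lemma chset_nonempty (x y : Z) : {r : ℕ | 1 ≤ r ∧ ChainD dist (r : ℝ) x y}.Nonempty := by
  refine ⟨⌈dist x y⌉₊ + 1, by omega, chain_single ?_⟩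
  have h1 : dist x y ≤ (⌈dist x y⌉₊ : ℝ) := Nat.le_ceil _
  have h2 : ((⌈dist x y⌉₊ : ℕ) : ℝ) < ((⌈dist x y⌉₊ + 1 : ℕ) : ℝ) := by push_cast; linarith
  linarith

lemma du_self (x : Z) : du dist x x = 0 := by simp [du]

lemma du_nonneg (x y : Z) : 0 ≤ du dist x y := by
  unfold du; split <;> positivity

lemma du_eq_nat (x y : Z) : ∃ n : ℕ, du dist x y = (n : ℝ) := by
  unfold du; split
  · exact ⟨0, by simp⟩
  · exact ⟨_, rfl⟩

lemma du_spec {x y : Z} (h : x ≠ y) :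
    1 ≤ sInf {r : ℕ | 1 ≤ r ∧ ChainD dist (r : ℝ) x y} ∧
      ChainD dist ((sInf {r : ℕ | 1 ≤ r ∧ ChainD dist (r : ℝ) x y} : ℕ) : ℝ) x y :=
  Nat.sInf_mem (chset_nonempty x y)

lemma du_eq_sInf {x y : Z} (h : x ≠ y) :
    du dist x y = ((sInf {r : ℕ | 1 ≤ r ∧ ChainD dist (r : ℝ) x y} : ℕ) : ℝ) := by
  simp [du, h]

lemma du_le {x y : Z} {r : ℕ} (h1 : 1 ≤ r) (hc : ChainD dist (r : ℝ) x y) :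
    du dist x y ≤ (r : ℝ) := by
  unfold du; split
  · positivity
  · have hmem : r ∈ {r : ℕ | 1 ≤ r ∧ ChainD dist (r : ℝ) x y} := ⟨h1, hc⟩
    exact_mod_cast Nat.sInf_le hmem

lemma du_symm (x y : Z) : du dist x y = du dist y x := by
  unfold du
  have hset : {r : ℕ | 1 ≤ r ∧ ChainD dist (r : ℝ) x y}
      = {r : ℕ | 1 ≤ r ∧ ChainD dist (r : ℝ) y x} := by
    ext r
    exact and_congr_right fun _ =>
      ⟨chain_symm (fun a b => dist_comm a b), chain_symm (fun a b => dist_comm a b)⟩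
  rw [hset]
  by_cases h : x = y
  · simp [h]
  · rw [if_neg h, if_neg (Ne.symm h)]

lemma du_ultra (x y z : Z) : du dist x z ≤ max (du dist x y) (du dist y z) := by
  by_cases hxz : x = z
  · rw [hxz, du_self]
    exact le_max_of_le_left (du_nonneg _ _)
  by_cases hxy : x = y
  · rw [hxy]; exact le_max_right _ _
  by_cases hyz : y = z
  · rw [← hyz]; exact le_max_left _ _
  set m1 := sInf {r : ℕ | 1 ≤ r ∧ ChainD dist (r : ℝ) x y} with hm1
  set m2 := sInf {r : ℕ | 1 ≤ r ∧ ChainD dist (r : ℝ) y z} with hm2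
  obtain ⟨hm1le, hc1⟩ := du_spec hxy
  obtain ⟨hm2le, hc2⟩ := du_spec hyz
  have hc : ChainD dist ((max m1 m2 : ℕ) : ℝ) x z := by
    refine chain_trans (chain_mono ?_ hc1) (chain_mono ?_ hc2)
    · exact_mod_cast le_max_left m1 m2
    · exact_mod_cast le_max_right m1 m2
  have hle := du_le (le_trans hm1le (le_max_left m1 m2)) hc
  rw [du_eq_sInf hxy, du_eq_sInf hyz, ← hm1, ← hm2]
  calc du dist x z ≤ ((max m1 m2 : ℕ) : ℝ) := hle
    _ = max (m1 : ℝ) (m2 : ℝ) := by push_cast; rfl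

lemma du_le_of_dist {x y : Z} {R : ℝ} (h : dist x y ≤ R) :
    du dist x y ≤ ((⌈R⌉₊ + 1 : ℕ) : ℝ) := by
  refine du_le (by omega) (chain_single ?_)
  have h1 : R ≤ (⌈R⌉₊ : ℝ) := Nat.le_ceil R
  have h2 : ((⌈R⌉₊ : ℕ) : ℝ) < ((⌈R⌉₊ + 1 : ℕ) : ℝ) := by push_cast; linarith
  linarith

lemma du_proper (hZ : AsDimZeroD (dist : Z → Z → ℝ)) {R : ℝ} (hR : 0 < R) :
    ∃ s > (0 : ℝ), ∀ x y : Z, du dist x y ≤ R → dist x y ≤ s := by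
  obtain ⟨s, hs, hbound⟩ := hZ (R + 1) (by linarith)
  refine ⟨s, hs, fun x y h => ?_⟩
  by_cases hxy : x = y
  · rw [hxy, dist_self]; linarith
  obtain ⟨-, hc⟩ := du_spec hxy
  rw [du_eq_sInf hxy] at h
  exact hbound x y (chain_mono (by linarith) hc)

noncomputable def dCU (f g : ℕ →₀ ℕ) : ℝ :=
  if f = g then 0 else ((sSup {n : ℕ | f n ≠ g n} + 1 : ℕ) : ℝ)

lemma diff_subset (f g : ℕ →₀ ℕ) : {n : ℕ | f n ≠ g n} ⊆ ↑(f.support ∪ g.support) := by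
  intro n hn
  simp only [Finset.coe_union, Set.mem_union, Finset.mem_coe, Finsupp.mem_support_iff]
  by_contra hc
  push_neg at hc
  exact hn (hc.1.trans hc.2.symm)

lemma diff_bdd (f g : ℕ →₀ ℕ) : BddAbove {n : ℕ | f n ≠ g n} :=
  (((f.support ∪ g.support).finite_toSet).subset (diff_subset f g)).bddAbove

lemma diff_nonempty {f g : ℕ →₀ ℕ} (h : f ≠ g) : {n : ℕ | f n ≠ g n}.Nonempty := by
  by_contra hc
  rw [Set.not_nonempty_iff_eq_empty] at hc
  apply h
  ext n
  by_contra hn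
  exact Set.eq_empty_iff_forall_notMem.mp hc n hn

lemma dCU_self (f : ℕ →₀ ℕ) : dCU f f = 0 := by simp [dCU]

lemma dCU_nonneg (f g : ℕ →₀ ℕ) : 0 ≤ dCU f g := by
  unfold dCU; split <;> positivity

lemma dCU_eq_nat (f g : ℕ →₀ ℕ) : ∃ n : ℕ, dCU f g = (n : ℝ) := by
  unfold dCU; split
  · exact ⟨0, by simp⟩
  · exact ⟨_, rfl⟩

lemma dCU_ne {f g : ℕ →₀ ℕ} (h : f ≠ g) :
    dCU f g = ((sSup {n : ℕ | f n ≠ g n} + 1 : ℕ) : ℝ) := if_neg h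

lemma dCU_eq_zero {f g : ℕ →₀ ℕ} (h : dCU f g = 0) : f = g := by
  by_contra hc
  rw [dCU_ne hc] at h
  have h2 : (sSup {n : ℕ | f n ≠ g n} + 1 : ℕ) = 0 := by exact_mod_cast h
  omega

lemma dCU_comm (f g : ℕ →₀ ℕ) : dCU f g = dCU g f := by
  unfold dCU
  have hset : {n : ℕ | f n ≠ g n} = {n : ℕ | g n ≠ f n} := by ext n; exact ne_comm
  rw [hset]
  by_cases h : f = g
  · simp [h]
  · rw [if_neg h, if_neg (Ne.symm h)]

lemma dCU_ultra (f g h : ℕ →₀ ℕ) : dCU f h ≤ max (dCU f g) (dCU g h) := by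
  by_cases hfh : f = h
  · rw [hfh, dCU_self]; exact le_max_of_le_left (dCU_nonneg _ _)
  set N := sSup {n : ℕ | f n ≠ h n} with hN
  have hmem : f N ≠ h N := Nat.sSup_mem (diff_nonempty hfh) (diff_bdd f h)
  rw [dCU_ne hfh, ← hN]
  by_cases hcase : f N = g N
  · have hgh : g N ≠ h N := fun e => hmem (hcase.trans e)
    have hne : g ≠ h := fun e => hgh (by rw [e])
    have hle : N ≤ sSup {n : ℕ | g n ≠ h n} := le_csSup (diff_bdd g h) hgh
    refine le_max_of_le_right ?_
    rw [dCU_ne hne]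
    have h2 : N + 1 ≤ sSup {n : ℕ | g n ≠ h n} + 1 := by omega
    exact_mod_cast h2
  · have hne : f ≠ g := fun e => hcase (by rw [e])
    have hle : N ≤ sSup {n : ℕ | f n ≠ g n} := le_csSup (diff_bdd f g) hcase
    refine le_max_of_le_left ?_
    rw [dCU_ne hne]
    have h2 : N + 1 ≤ sSup {n : ℕ | f n ≠ g n} + 1 := by omega
    exact_mod_cast h2

end UnivAux
/-- There is a countable integral ultrametric space `CU` into which every
separable metric space of asymptotic dimension 0 coarsely embeds. -/
theorem universal_space_separable_asdim_zero :
    ∃ (CU : Type) (dC : CU → CU → ℝ), Countable CU ∧ IsMetricD dC ∧ IsUltraD dC ∧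
      (∀ a b : CU, ∃ n : ℕ, dC a b = (n : ℝ)) ∧
      ∀ (Z : Type u) [MetricSpace Z] [TopologicalSpace.SeparableSpace Z],
        AsDimZeroD (dist : Z → Z → ℝ) →
        ∃ e : Z → CU, CoarseEmbD (dist : Z → Z → ℝ) dC e := by
  classical
  refine ⟨ℕ →₀ ℕ, UnivAux.dCU, inferInstance,
    ⟨UnivAux.dCU_self, fun f g => UnivAux.dCU_eq_zero, UnivAux.dCU_comm, fun f g h =>
      (UnivAux.dCU_ultra f g h).trans (max_le
        (le_add_of_nonneg_right (UnivAux.dCU_nonneg _ _))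
        (le_add_of_nonneg_left (UnivAux.dCU_nonneg _ _)))⟩,
    UnivAux.dCU_ultra, UnivAux.dCU_eq_nat, ?_⟩
  intro Z _ _ hAsDim
  by_cases hne : Nonempty Z
  case neg =>
    exact ⟨fun _ => 0,
      fun R hR => ⟨1, one_pos, fun x => absurd ⟨x⟩ hne⟩,
      fun R hR => ⟨1, one_pos, fun x => absurd ⟨x⟩ hne⟩⟩
  haveI := hne
  obtain ⟨u, hu⟩ := TopologicalSpace.exists_dense_seq Z
  have hex : ∀ (x : Z) (n : ℕ), ∃ j : ℕ, UnivAux.du dist (u j) x ≤ ((n + 2 : ℕ) : ℝ) := by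
    intro x n
    obtain ⟨j, hj⟩ := hu.exists_dist_lt x one_pos
    refine ⟨j, ?_⟩
    have h1 : dist (u j) x ≤ 1 := by rw [dist_comm]; linarith
    have h2 := UnivAux.du_le_of_dist h1
    have h3 : ((⌈(1:ℝ)⌉₊ + 1 : ℕ) : ℝ) ≤ ((n + 2 : ℕ) : ℝ) := by
      rw [Nat.ceil_one]
      push_cast
      linarith [Nat.cast_nonneg (α := ℝ) n]
    linarith
  set rep : Z → ℕ → ℕ := fun x n => Nat.find (hex x n) with hrepdef
  have repspec : ∀ (x : Z) (n : ℕ), UnivAux.du dist (u (rep x n)) x ≤ ((n + 2 : ℕ) : ℝ) :=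
    fun x n => Nat.find_spec (hex x n)
  have rep_congr : ∀ (x y : Z) (n : ℕ),
      UnivAux.du dist x y ≤ ((n + 2 : ℕ) : ℝ) → rep x n = rep y n := by
    intro x y n hxy
    have key : ∀ j : ℕ, (UnivAux.du dist (u j) x ≤ ((n + 2 : ℕ) : ℝ) ↔
        UnivAux.du dist (u j) y ≤ ((n + 2 : ℕ) : ℝ)) := by
      intro j
      constructor
      · intro hx
        exact le_trans (UnivAux.du_ultra (u j) x y) (max_le hx hxy)
      · intro hy
        have hyx : UnivAux.du dist y x ≤ ((n + 2 : ℕ) : ℝ) := by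
          rw [UnivAux.du_symm]; exact hxy
        exact le_trans (UnivAux.du_ultra (u j) y x) (max_le hy hyx)
    apply le_antisymm
    · exact Nat.find_min' (hex x n) ((key _).mpr (Nat.find_spec (hex y n)))
    · exact Nat.find_min' (hex y n) ((key _).mp (Nat.find_spec (hex x n)))
  have rep_close : ∀ (x y : Z) (n : ℕ),
      rep x n = rep y n → UnivAux.du dist x y ≤ ((n + 2 : ℕ) : ℝ) := by
    intro x y n hxy
    have h1 := repspec x n
    rw [hxy] at h1
    have h1' : UnivAux.du dist x (u (rep y n)) ≤ ((n + 2 : ℕ) : ℝ) := by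
      rw [UnivAux.du_symm]; exact h1
    exact le_trans (UnivAux.du_ultra x (u (rep y n)) y) (max_le h1' (repspec y n))
  have hsupp : ∀ (x : Z) (n : ℕ), rep x n ≠ 0 →
      n ∈ Finset.range (⌈UnivAux.du dist (u 0) x⌉₊ + 1) := by
    intro x n hn
    rw [Finset.mem_range]
    by_contra hc
    push_neg at hc
    apply hn
    have h0 : UnivAux.du dist (u 0) x ≤ ((n + 2 : ℕ) : ℝ) := by
      have hle := Nat.le_ceil (UnivAux.du dist (u 0) x)
      have hcast : ((⌈UnivAux.du dist (u 0) x⌉₊ : ℕ) : ℝ) ≤ ((n + 2 : ℕ) : ℝ) := by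
        have : ⌈UnivAux.du dist (u 0) x⌉₊ ≤ n + 2 := by omega
        exact_mod_cast this
      linarith
    exact Nat.le_zero.mp (Nat.find_min' (hex x n) h0)
  set E : Z → (ℕ →₀ ℕ) := fun x => Finsupp.onFinset _ (rep x) (hsupp x) with hEdef
  have hEapply : ∀ (x : Z) (n : ℕ), (E x) n = rep x n := fun x n => rfl
  have B1 : ∀ x y : Z, UnivAux.dCU (E x) (E y) ≤ UnivAux.du dist x y := by
    intro x y
    by_cases hE : E x = E y
    · rw [hE, UnivAux.dCU_self]; exact UnivAux.du_nonneg x y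
    · set N := sSup {n : ℕ | (E x) n ≠ (E y) n} with hN
      have hmem : (E x) N ≠ (E y) N :=
        Nat.sSup_mem (UnivAux.diff_nonempty hE) (UnivAux.diff_bdd _ _)
      have hrepne : rep x N ≠ rep y N := by rwa [hEapply, hEapply] at hmem
      have hgt : ¬ UnivAux.du dist x y ≤ ((N + 2 : ℕ) : ℝ) :=
        fun hc => hrepne (rep_congr x y N hc)
      push_neg at hgt
      rw [UnivAux.dCU_ne hE, ← hN]
      have hcast : ((N + 1 : ℕ) : ℝ) ≤ ((N + 2 : ℕ) : ℝ) := by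
        have : N + 1 ≤ N + 2 := by omega
        exact_mod_cast this
      linarith
  have B2 : ∀ x y : Z, UnivAux.du dist x y ≤ UnivAux.dCU (E x) (E y) + 2 := by
    intro x y
    by_cases hE : E x = E y
    · have h0 : rep x 0 = rep y 0 := by
        have := DFunLike.congr_fun hE 0
        rwa [hEapply, hEapply] at this
      have hdu := rep_close x y 0 h0
      rw [hE, UnivAux.dCU_self]
      have : ((0 + 2 : ℕ) : ℝ) = 0 + 2 := by push_cast; ring
      linarith [this ▸ hdu]
    · set N := sSup {n : ℕ | (E x) n ≠ (E y) n} with hN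
      have hrep : rep x (N + 1) = rep y (N + 1) := by
        by_contra hc
        have hmem2 : (N + 1) ∈ {n : ℕ | (E x) n ≠ (E y) n} := by
          simp only [Set.mem_setOf_eq, hEapply]; exact hc
        have := le_csSup (UnivAux.diff_bdd (E x) (E y)) hmem2
        rw [← hN] at this
        omega
      have hdu := rep_close x y (N + 1) hrep
      rw [UnivAux.dCU_ne hE, ← hN]
      have hcast : ((N + 1 + 2 : ℕ) : ℝ) = ((N + 1 : ℕ) : ℝ) + 2 := by push_cast; ring
      linarith [hcast ▸ hdu]
  have hp : ∀ z : Z, ∃ j : ℕ, dist z (u j) ≤ 1 :=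
    fun z => (hu.exists_dist_lt z one_pos).imp (fun j hj => le_of_lt hj)
  choose pj hpj using hp
  set p : Z → Z := fun z => u (pj z) with hpdef
  refine ⟨fun z => E (p z), ?_, ?_⟩
  · intro R hR
    refine ⟨((⌈R + 2⌉₊ + 1 : ℕ) : ℝ), by exact_mod_cast Nat.succ_pos _, fun x y hxy => ?_⟩
    have t1 : dist (p x) (p y) ≤ dist (p x) x + dist x y + dist y (p y) :=
      dist_triangle4 _ _ _ _
    have t2 : dist (p x) x = dist x (p x) := dist_comm _ _
    have hx := hpj x; have hy := hpj y
    have hd : dist (p x) (p y) ≤ R + 2 := by rw [t2] at t1; linarith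
    calc UnivAux.dCU (E (p x)) (E (p y)) ≤ UnivAux.du dist (p x) (p y) := B1 _ _
      _ ≤ _ := UnivAux.du_le_of_dist hd
  · intro R hR
    obtain ⟨s, hs, hsb⟩ := UnivAux.du_proper hAsDim (show (0:ℝ) < R + 2 by linarith)
    refine ⟨s + 2, by linarith, fun x y hxy => ?_⟩
    have hdu : UnivAux.du dist (p x) (p y) ≤ R + 2 := le_trans (B2 _ _) (by linarith)
    have hdist := hsb _ _ hdu
    have t1 : dist x y ≤ dist x (p x) + dist (p x) (p y) + dist (p y) y :=
      dist_triangle4 _ _ _ _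
    have t2 : dist (p y) y = dist y (p y) := dist_comm _ _
    have hx := hpj x; have hy := hpj y
    rw [t2] at t1; linarith
end
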